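/- arXiv:0804.2908 — 3 statements merged into one kernel-verified Lean document; each statement's English description precedes it below -/
import Mathlib

section
/- Let T be an n-consistent theory with at most ℵ₀ isomorphism classes of n-generated models, and let M be an n-generated model of T. Then for every generating tuple ā of M, there exists a formula φ(x̄) such that for every finitely generated model N of T generated by b̄: (M, ā) ≅ (N, b̄) if and only if N ⊨ φ(b̄) and rk(N) ≥ rk(M). -/
open FirstOrder FirstOrder.Language Cardinal

namespace Paper

variable (L : FirstOrder.Language.{0, 0})

/-- A tuple `a` generates `M`: every element is the value of a term at `a`. -/
def Generates {M : Type*} [L.Structure M] {n : ℕ} (a : Fin n → M) : Prop :=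
  ∀ y : M, ∃ t : L.Term (Fin n), t.realize a = y

/-- A type over the language `L(c₁,…,cₙ)` in `k` free variables, represented as a set of
`L`-formulas in variables `Fin n ⊕ Fin k` (the first block playing the role of the constants). -/
def NType (n : ℕ) : Type := Σ k : ℕ, Set (L.Formula (Fin n ⊕ Fin k))

variable {L}

/-- The pair `(M, a)` realizes the type `p` (in the language with the constants interpreted
as `a`). -/
def RealizesNType {M : Type*} [L.Structure M] {n : ℕ} (a : Fin n → M) (p : NType L n) : Prop :=
  ∃ v : Fin p.1 → M, ∀ φ ∈ p.2, φ.Realize (Sum.elim a v)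

variable (L) in
/-- The type `pₙ(y) = { y ≠ τ(c̄) | τ an L-term }`. -/
def pType (n : ℕ) : NType L n :=
  ⟨1, { φ | ∃ t : L.Term (Fin n),
    φ = (Term.equal (t.relabel Sum.inl) (Term.var (Sum.inr 0))).not }⟩

/-- The complete type `p_ā(M)` of a tuple, viewed as a set of sentences of `L(c̄)`. -/
def ctype {M : Type*} [L.Structure M] {n : ℕ} (a : Fin n → M) : NType L n :=
  ⟨0, { φ | ∃ ψ : L.Formula (Fin n), ψ.Realize a ∧ φ = ψ.relabel Sum.inl }⟩

/-- A type (in the language with constants) is supported over a class `K` of models-with-tuples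
if some formula, satisfiable in `K`, forces realization of the type throughout `K`. -/
def Supported {T : L.Theory} {n : ℕ} (K : Set (Σ M : Theory.ModelType.{0, 0, 0} T, Fin n → M))
    (p : NType L n) : Prop :=
  ∃ φ : L.Formula (Fin n ⊕ Fin p.1),
    (∃ P ∈ K, ∃ v : Fin p.1 → P.1, φ.Realize (Sum.elim P.2 v)) ∧
    ∀ P ∈ K, ∀ v : Fin p.1 → P.1, φ.Realize (Sum.elim P.2 v) →
      ∀ ψ ∈ p.2, ψ.Realize (Sum.elim P.2 v)

/-- `rk`: `RankEq T n α M` means the `n`-rank of `M` is `α`. Defined by transfinite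
recursion: the rank is `α ≥ 1` iff for every generating `n`-tuple `ā`, `p_ā(M)` is
supported over the class of models (with generating tuple) of `T` omitting `pₙ` and the
complete types of all models of smaller rank. -/
def RankEq (T : L.Theory) (n : ℕ) : Ordinal.{0} → Theory.ModelType.{0, 0, 0} T → Prop :=
  Ordinal.lt_wf.fix fun α ih M =>
    1 ≤ α ∧ (∃ a : Fin n → M, Generates L a) ∧
      ∀ a : Fin n → M, Generates L a →
        Supported
          { P : Σ N : T.ModelType, Fin n → N |
            ¬ RealizesNType (L := L) P.2 (pType L n) ∧
            ∀ β : Ordinal, (h : β < α) → ∀ N : T.ModelType, ih β h N →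
              ∀ b : Fin n → N, Generates L b → ¬ RealizesNType (L := L) P.2 (ctype (L := L) b) }
          (ctype a)

/-- The class `K(T|P_{n,α})`: models of `T` with a distinguished `n`-tuple, omitting `pₙ`
(equivalently, generated by the tuple) and omitting the complete type of every `n`-generated
model of `T` of rank `< α`. -/
def Kclass (T : L.Theory) (n : ℕ) (α : Ordinal.{0}) :
    Set (Σ M : Theory.ModelType.{0, 0, 0} T, Fin n → M) :=
  { P | ¬ RealizesNType (L := L) P.2 (pType L n) ∧
    ∀ β : Ordinal, β < α → ∀ N : T.ModelType, RankEq T n β N →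
      ∀ b : Fin n → N, Generates L b → ¬ RealizesNType (L := L) P.2 (ctype (L := L) b) }

variable (L) in
/-- `n`-generated models of `T` (with countable carrier). -/
abbrev NGenModel (T : L.Theory) (n : ℕ) : Type 1 :=
  { M : Theory.ModelType.{0, 0, 0} T // ∃ a : Fin n → M, Generates L a }

instance isoSetoid {T : L.Theory} {n : ℕ} : Setoid (NGenModel L T n) where
  r M N := Nonempty (M.1 ≃[L] N.1)
  iseqv := ⟨fun M => ⟨FirstOrder.Language.Equiv.refl L M.1⟩, fun ⟨e⟩ => ⟨e.symm⟩, fun ⟨e⟩ ⟨f⟩ => ⟨FirstOrder.Language.Equiv.comp f e⟩⟩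

variable (L) in
/-- `α_n(T)`: the number of isomorphism classes of `n`-generated models of `T`. -/
def alphaCard (T : L.Theory) (n : ℕ) : Cardinal.{1} :=
  Cardinal.mk (Quotient (isoSetoid (L := L) (T := T) (n := n)))

variable (L) in
/-- `T` is `n`-consistent: it has an `n`-generated model. -/
def NConsistent (T : L.Theory) (n : ℕ) : Prop :=
  ∃ M : Theory.ModelType.{0, 0, 0} T, ∃ a : Fin n → M, Generates L a


/-! ### Universal / existential formulas, ∀∃ theories -/

variable (L) in
/-- A universal formula: universal quantifiers over a quantifier-free formula. -/
def IsUniversalFormula {α : Type} (φ : L.Formula α) : Prop :=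
  ∃ (k : ℕ) (ψ : L.BoundedFormula α k), ψ.IsQF ∧ φ = ψ.alls

variable (L) in
/-- An existential formula: existential quantifiers over a quantifier-free formula. -/
def IsExistentialFormula {α : Type} (φ : L.Formula α) : Prop :=
  ∃ (k : ℕ) (ψ : L.BoundedFormula α k), ψ.IsQF ∧ φ = ψ.exs

/-- Iterated existential quantification of the last `k` bounded variables. -/
def exsTo {α : Type} : ∀ {m k : ℕ}, L.BoundedFormula α (m + k) → L.BoundedFormula α m
  | _, 0, φ => φ
  | _, _ + 1, φ => exsTo φ.ex

variable (L) in
/-- A `∀∃`-sentence: `∀ x̄ ∃ ȳ ψ` with `ψ` quantifier-free. -/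
def IsAESentence (σ : L.Sentence) : Prop :=
  ∃ (m k : ℕ) (ψ : L.BoundedFormula Empty (m + k)), ψ.IsQF ∧ σ = (exsTo ψ).alls

variable (L) in
/-- A `∀∃`-theory. -/
def IsAETheory (T : L.Theory) : Prop := ∀ σ ∈ T, IsAESentence L σ

/-- The universal type `p_{ā,∀}(M)` of a tuple: universal sentences of `L(c̄)` true of `ā`. -/
def utype {M : Type*} [L.Structure M] {n : ℕ} (a : Fin n → M) : NType L n :=
  ⟨0, { φ | ∃ ψ : L.Formula (Fin n),
    IsUniversalFormula L ψ ∧ ψ.Realize a ∧ φ = ψ.relabel Sum.inl }⟩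

/-- A universal type is existentially supported over a class `K` if some existential formula,
satisfiable in `K`, forces its realization throughout `K`. -/
def ESupported {T : L.Theory} {n : ℕ} (K : Set (Σ M : Theory.ModelType.{0, 0, 0} T, Fin n → M))
    (p : NType L n) : Prop :=
  ∃ φ : L.Formula (Fin n ⊕ Fin p.1), IsExistentialFormula L φ ∧
    (∃ P ∈ K, ∃ v : Fin p.1 → P.1, φ.Realize (Sum.elim P.2 v)) ∧
    ∀ P ∈ K, ∀ v : Fin p.1 → P.1, φ.Realize (Sum.elim P.2 v) →
      ∀ ψ ∈ p.2, ψ.Realize (Sum.elim P.2 v)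

/-- `Rk`: the rank defined from universal types and existential supports. -/
def URankEq (T : L.Theory) (n : ℕ) : Ordinal.{0} → Theory.ModelType.{0, 0, 0} T → Prop :=
  Ordinal.lt_wf.fix fun α ih M =>
    1 ≤ α ∧ (∃ a : Fin n → M, Generates L a) ∧
      ∀ a : Fin n → M, Generates L a →
        ESupported
          { P : Σ N : Theory.ModelType.{0, 0, 0} T, Fin n → N |
            ¬ RealizesNType (L := L) P.2 (pType L n) ∧
            ∀ β : Ordinal, (h : β < α) → ∀ N : Theory.ModelType.{0, 0, 0} T, ih β h N →
              ∀ b : Fin n → N, Generates L b → ¬ RealizesNType (L := L) P.2 (utype b) }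
          (utype a)

/-- The class `K(T|Q_{n,α})` of the universal rank. -/
def UKclass (T : L.Theory) (n : ℕ) (α : Ordinal.{0}) :
    Set (Σ M : Theory.ModelType.{0, 0, 0} T, Fin n → M) :=
  { P | ¬ RealizesNType (L := L) P.2 (pType L n) ∧
    ∀ β : Ordinal, β < α → ∀ N : Theory.ModelType.{0, 0, 0} T, URankEq T n β N →
      ∀ b : Fin n → N, Generates L b → ¬ RealizesNType (L := L) P.2 (utype b) }

/-! ### Types in finitely many variables, classes of models, omitting types -/

variable (L) in
/-- A type in finitely many variables. -/
def MType : Type := Σ k : ℕ, Set (L.Formula (Fin k))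

variable (L) in
/-- A type all of whose formulas are universal. -/
def IsUniversalMType (p : MType L) : Prop := ∀ φ ∈ p.2, IsUniversalFormula L φ

/-- A model realizes a type if some tuple satisfies all of its formulas. -/
def MRealizes {T : L.Theory} (M : Theory.ModelType.{0, 0, 0} T) (p : MType L) : Prop :=
  ∃ v : Fin p.1 → M, ∀ φ ∈ p.2, φ.Realize v

/-- The class `K(T|P)` of models of `T` omitting every type in `P`. -/
def KTP (T : L.Theory) (P : Set (MType L)) : Set (Theory.ModelType.{0, 0, 0} T) :=
  { M | ∀ p ∈ P, ¬ MRealizes M p }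

/-- A type is supported over a class `K` of models of `T`. -/
def MSupported {T : L.Theory} (K : Set (Theory.ModelType.{0, 0, 0} T)) (q : MType L) : Prop :=
  ∃ φ : L.Formula (Fin q.1),
    (∃ M ∈ K, ∃ v : Fin q.1 → M, φ.Realize v) ∧
    ∀ M ∈ K, ∀ v : Fin q.1 → M, φ.Realize v → ∀ ψ ∈ q.2, ψ.Realize v

/-- A universal type is existentially supported over a class `K` of models of `T`. -/
def MESupported {T : L.Theory} (K : Set (Theory.ModelType.{0, 0, 0} T)) (q : MType L) : Prop :=
  ∃ φ : L.Formula (Fin q.1), IsExistentialFormula L φ ∧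
    (∃ M ∈ K, ∃ v : Fin q.1 → M, φ.Realize v) ∧
    ∀ M ∈ K, ∀ v : Fin q.1 → M, φ.Realize v → ∀ ψ ∈ q.2, ψ.Realize v


/-! ### Groups -/

/-- The function symbols of the language of groups. -/
inductive GroupFunc : ℕ → Type
  | mul : GroupFunc 2
  | inv : GroupFunc 1
  | one : GroupFunc 0

/-- The first-order language of groups. -/
def grpLang : FirstOrder.Language.{0, 0} := ⟨GroupFunc, fun _ => Empty⟩

/-- Any group is a `grpLang`-structure. -/
instance grpStructure (G : Type*) [Group G] : grpLang.Structure G where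
  funMap {n} f v :=
    match f with
    | .mul => v 0 * v 1
    | .inv => (v 0)⁻¹
    | .one => 1
  RelMap {n} r := r.elim

/-- The universal theory `Th_∀(H)` of a group `H`. -/
def uTheoryOf (H : Type*) [Group H] : grpLang.Theory :=
  { σ | IsUniversalFormula grpLang σ ∧ H ⊨ σ }

/-- The algebraic set `V(S)` defined by a set `S ⊆ H ∗ F(x₁,…,xₙ)` of equations. -/
def Vset {H : Type} [Group H] {n : ℕ} (S : Set (Monoid.Coprod H (FreeGroup (Fin n)))) :
    Set (Fin n → H) :=
  { g | ∀ s ∈ S, Monoid.Coprod.lift (MonoidHom.id H) (FreeGroup.lift g) s = 1 }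

/-- A group `H` is equationally noetherian if every algebraic set over `H` is defined by a
finite subsystem. -/
def EquationallyNoetherian (H : Type) [Group H] : Prop :=
  ∀ (n : ℕ) (S : Set (Monoid.Coprod H (FreeGroup (Fin n)))),
    ∃ S₀ ⊆ S, S₀.Finite ∧ Vset S = Vset S₀

/-- Bundled finitely generated `H`-limit groups (with countable-universe carrier):
finitely generated groups satisfying the universal theory of `H`. -/
def LimitGroup (H : Type) [Group H] : Type 1 :=
  { G : GrpCat.{0} // Group.FG G ∧ (G : Type) ⊨ uTheoryOf H }

instance limitGroupSetoid {H : Type} [Group H] : Setoid (LimitGroup H) where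
  r A B := Nonempty ((A.1 : Type) ≃* (B.1 : Type))
  iseqv := ⟨fun A => ⟨MulEquiv.refl _⟩, fun ⟨e⟩ => ⟨e.symm⟩, fun ⟨e⟩ ⟨f⟩ => ⟨e.trans f⟩⟩

/-- `GRank H G γ` : the group `G`, as a model of `Th_∀(H)`, has universal rank `Rk(G) = γ`
(with respect to some tuple-length). -/
def GRank (H : Type) [Group H] (G : Type) [Group G] (hmod : G ⊨ uTheoryOf H)
    (γ : Ordinal.{0}) : Prop :=
  ∃ n : ℕ, URankEq (uTheoryOf H) n γ
    (@Theory.ModelType.of grpLang (uTheoryOf H) G _ hmod One.instNonempty)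

/-- `G` is `H`-determined: some finite set `X ⊆ G \ {1}` is such that every homomorphism
from `G` to an `H`-limit group killing no element of `X` is injective. -/
def HDetermined (H : Type) [Group H] (G : Type) [Group G] : Prop :=
  ∃ X : Finset G, (1 : G) ∉ X ∧
    ∀ (L' : Type) [Group L'], Group.FG L' → (L' ⊨ uTheoryOf H) →
      ∀ f : G →* L', (∀ x ∈ X, f x ≠ 1) → Function.Injective f

/-! ### Auxiliary development for `stmt_7` -/

section Aux

open Set

variable {T : L.Theory} {n : ℕ}

/-- The complete type of a tuple, as a set of formulas. -/
def tpv {M : Type*} [L.Structure M] (a : Fin n → M) : Set (L.Formula (Fin n)) :=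
  { ψ | ψ.Realize a }

variable {M : Type*} [L.Structure M] {N : Type*} [L.Structure N]

lemma not_mem_tpv {a : Fin n → M} {ψ : L.Formula (Fin n)} :
    ψ ∉ tpv a ↔ ψ.not ∈ tpv (L := L) a := by
  simp [tpv, Formula.realize_not]

lemma tpv_eq_of_subset {a : Fin n → M} {b : Fin n → N}
    (h : tpv (L := L) a ⊆ tpv (L := L) b) :
    tpv (L := L) a = tpv (L := L) b := by
  apply Set.Subset.antisymm h
  intro ψ hψ
  by_contra hna
  exact (not_mem_tpv.2 (h (not_mem_tpv.1 hna))) hψ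

lemma realizesNType_pType_iff {a : Fin n → M} :
    RealizesNType a (pType L n) ↔ ¬ Generates L a := by
  constructor
  · rintro ⟨v, hv⟩ hgen
    obtain ⟨t, ht⟩ := hgen (v ⟨0, Nat.zero_lt_one⟩)
    have := hv _ ⟨t, rfl⟩
    erw [Formula.realize_not, Formula.realize_equal, Term.realize_relabel] at this
    apply this
    erw [Sum.elim_comp_inl]
    exact ht
  · intro hgen
    rw [Generates] at hgen
    push_neg at hgen
    obtain ⟨y, hy⟩ := hgen
    refine ⟨fun _ => y, ?_⟩
    rintro φ ⟨t, rfl⟩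
    erw [Formula.realize_not, Formula.realize_equal, Term.realize_relabel,
      Sum.elim_comp_inl]
    exact hy t

lemma realizesNType_ctype_iff {a : Fin n → M} {b : Fin n → N} :
    RealizesNType (L := L) b (ctype a) ↔ tpv (L := L) a ⊆ tpv (L := L) b := by
  constructor
  · rintro ⟨v, hv⟩ ψ hψ
    have := hv (ψ.relabel Sum.inl) ⟨ψ, hψ, rfl⟩
    rwa [Formula.realize_relabel, Sum.elim_comp_inl] at this
  · intro h
    refine ⟨Fin.elim0, ?_⟩
    rintro φ ⟨ψ, hψ, rfl⟩
    erw [Formula.realize_relabel, Sum.elim_comp_inl]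
    exact h hψ

/-- Two generated structures whose generating tuples have the same complete type are
isomorphic via a tuple-preserving isomorphism. -/
lemma exists_equiv_of_tpv_subset {a : Fin n → M} {b : Fin n → N}
    (ha : Generates L a) (hb : Generates L b) (h : tpv (L := L) a ⊆ tpv (L := L) b) :
    ∃ e : M ≃[L] N, ∀ i, e (a i) = b i := by
  have heq : tpv a = tpv b := tpv_eq_of_subset h
  have key : ∀ t s : L.Term (Fin n), t.realize a = s.realize a → t.realize b = s.realize b := by
    intro t s hts
    have : Term.equal t s ∈ tpv (L := L) a := by
      simpa [tpv, Formula.realize_equal] using hts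
    rw [heq] at this
    simpa [tpv, Formula.realize_equal] using this
  have key' : ∀ t s : L.Term (Fin n), t.realize b = s.realize b → t.realize a = s.realize a := by
    intro t s hts
    have : Term.equal t s ∈ tpv (L := L) b := by
      simpa [tpv, Formula.realize_equal] using hts
    rw [← heq] at this
    simpa [tpv, Formula.realize_equal] using this
  choose g hg using ha
  choose g' hg' using hb
  set F : M → N := fun x => (g x).realize b with hF
  set G : N → M := fun y => (g' y).realize a with hG
  have hFt : ∀ t : L.Term (Fin n), F (t.realize a) = t.realize b := fun t =>
    key _ t (hg _)
  have hGt : ∀ t : L.Term (Fin n), G (t.realize b) = t.realize a := fun t =>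
    key' _ t (hg' _)
  have hGF : ∀ x, G (F x) = x := by
    intro x
    rw [← hg x, hFt, hGt]
  have hFG : ∀ y, F (G y) = y := by
    intro y
    rw [← hg' y, hGt, hFt]
  have hmapfun : ∀ {m : ℕ} (f : L.Functions m) (x : Fin m → M),
      F (Structure.funMap f x) = Structure.funMap f (F ∘ x) := by
    intro m f x
    have h0 : Structure.funMap f x = (Term.func f (fun i => g (x i))).realize a := by
      simp only [Term.realize_func]
      congr 1
      funext i
      exact (hg (x i)).symm
    rw [h0, hFt]
    simp only [Term.realize_func]
    congr 1
  have hmaprel : ∀ {m : ℕ} (r : L.Relations m) (x : Fin m → M),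
      Structure.RelMap (M := N) r (F ∘ x) ↔ Structure.RelMap r x := by
    intro m r x
    have h1 : (Relations.formula r fun i => g (x i)).Realize a ↔ Structure.RelMap r x := by
      rw [Formula.realize_rel]
      exact iff_of_eq (congrArg _ (funext fun i => hg (x i)))
    have h2 : (Relations.formula r fun i => g (x i)).Realize b ↔
        Structure.RelMap (M := N) r (F ∘ x) := by
      rw [Formula.realize_rel]
      exact Iff.rfl
    rw [← h2, ← h1]
    constructor
    · intro hh
      have hmem : Relations.formula r (fun i => g (x i)) ∈ tpv (L := L) b := hh
      rw [← heq] at hmem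
      exact hmem
    · intro hh
      have hmem : Relations.formula r (fun i => g (x i)) ∈ tpv (L := L) a := hh
      rw [heq] at hmem
      exact hmem
  refine ⟨⟨⟨F, G, Function.leftInverse_iff_comp.2 (funext hGF),
      Function.rightInverse_iff_comp.2 (funext hFG)⟩, fun f x => hmapfun f x,
      fun r x => hmaprel r x⟩, ?_⟩
  intro i
  have h3 : a i = (Term.var i : L.Term (Fin n)).realize a := rfl
  show F (a i) = b i
  rw [h3, hFt]
  rfl

lemma tpv_comp_equiv (e : M ≃[L] N) (a : Fin n → M) :
    tpv (L := L) (fun i => e (a i)) = tpv (L := L) a := by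
  ext ψ
  simp only [tpv, Set.mem_setOf_eq]
  exact StrongHomClass.realize_formula e ψ

lemma generates_comp_equiv (e : M ≃[L] N) {a : Fin n → M} (ha : Generates L a) :
    Generates L (fun i => e (a i)) := by
  intro y
  obtain ⟨t, ht⟩ := ha (e.symm y)
  refine ⟨t, ?_⟩
  have h2 : e (t.realize a) = y := by rw [ht]; simp
  rw [← h2, ← HomClass.realize_term (g := e)]
  rfl

end Aux

section Rank

variable {T : L.Theory} {n : ℕ}

lemma ctype_eq_of_tpv_eq {M : Type*} [L.Structure M] {N : Type*} [L.Structure N]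
    {a : Fin n → M} {b : Fin n → N} (h : tpv (L := L) a = tpv (L := L) b) :
    ctype (L := L) a = ctype (L := L) b := by
  unfold ctype
  congr 1
  ext φ
  constructor
  · rintro ⟨ψ, hψ, rfl⟩
    exact ⟨ψ, (Set.ext_iff.1 h ψ).1 hψ, rfl⟩
  · rintro ⟨ψ, hψ, rfl⟩
    exact ⟨ψ, (Set.ext_iff.1 h ψ).2 hψ, rfl⟩

lemma rankEq_iff {γ : Ordinal.{0}} {M : Theory.ModelType.{0,0,0} T} :
    RankEq T n γ M ↔
      (1 ≤ γ ∧ (∃ a : Fin n → M, Generates L a) ∧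
        ∀ a : Fin n → M, Generates L a → Supported (Kclass T n γ) (ctype a)) := by
  have h := congrFun (WellFounded.fix_eq (C := fun _ : Ordinal.{0} =>
    Theory.ModelType.{0,0,0} T → Prop) Ordinal.lt_wf
    (fun α ih M =>
      1 ≤ α ∧ (∃ a : Fin n → M, Generates L a) ∧
      ∀ a : Fin n → M, Generates L a →
        Supported
          { P : Σ N : T.ModelType, Fin n → N |
            ¬ RealizesNType (L := L) P.2 (pType L n) ∧
            ∀ β : Ordinal, (h : β < α) → ∀ N : T.ModelType, ih β h N →
              ∀ b : Fin n → N, Generates L b → ¬ RealizesNType (L := L) P.2 (ctype (L := L) b) }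
          (ctype a)) γ) M
  exact iff_of_eq h

/-- Convenient form of membership in `Kclass`. -/
lemma mem_kclass_iff {γ : Ordinal.{0}} {P : Σ M : Theory.ModelType.{0,0,0} T, Fin n → M} :
    P ∈ Kclass T n γ ↔
      (Generates L P.2 ∧ ∀ β : Ordinal, β < γ → ∀ N : Theory.ModelType.{0,0,0} T,
        RankEq T n β N → ∀ b : Fin n → N, Generates L b →
          ¬ tpv (L := L) b ⊆ tpv (L := L) P.2) := by
  unfold Kclass
  rw [Set.mem_setOf_eq, realizesNType_pType_iff, not_not]
  refine and_congr_right fun _ => ?_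
  constructor
  · intro h β hβ N hN b hb
    rw [← realizesNType_ctype_iff]
    exact h β hβ N hN b hb
  · intro h β hβ N hN b hb
    rw [realizesNType_ctype_iff]
    exact h β hβ N hN b hb

lemma kclass_antitone {γ γ' : Ordinal.{0}} (h : γ ≤ γ') :
    Kclass T n γ' ⊆ Kclass (L := L) T n γ := by
  intro P hP
  rw [mem_kclass_iff] at hP ⊢
  exact ⟨hP.1, fun β hβ => hP.2 β (lt_of_lt_of_le hβ h)⟩

lemma gen_of_mem_kclass {γ : Ordinal.{0}} {P : Σ M : Theory.ModelType.{0,0,0} T, Fin n → M}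
    (h : P ∈ Kclass T n γ) : Generates L P.2 := (mem_kclass_iff.1 h).1

/-- A ranked model with a generating tuple leaves every later class. -/
lemma not_mem_kclass_of_rank {γ β : Ordinal.{0}} {P : Σ M : Theory.ModelType.{0,0,0} T, Fin n → M}
    (hg : Generates L P.2) (hr : RankEq T n β P.1) (hβ : β < γ) : P ∉ Kclass T n γ := by
  intro hP
  exact (mem_kclass_iff.1 hP).2 β hβ P.1 hr P.2 hg subset_rfl

lemma supported_of_tpv_eq {γ : Ordinal.{0}} {M : Type*} [L.Structure M] {N : Type*}
    [L.Structure N] {a : Fin n → M} {b : Fin n → N} (h : tpv (L := L) a = tpv (L := L) b)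
    (hs : Supported (T := T) (Kclass T n γ) (ctype a)) :
    Supported (T := T) (Kclass T n γ) (ctype b) := by
  rwa [ctype_eq_of_tpv_eq h] at hs

/-- `RankEq` is invariant under isomorphism. -/
lemma rankEq_of_equiv {γ : Ordinal.{0}} {M N : Theory.ModelType.{0,0,0} T}
    (e : (M : Type) ≃[L] (N : Type)) (h : RankEq T n γ M) : RankEq T n γ N := by
  rw [rankEq_iff] at h ⊢
  obtain ⟨h1, ⟨a₀, ha₀⟩, h3⟩ := h
  refine ⟨h1, ⟨fun i => e (a₀ i), generates_comp_equiv e ha₀⟩, ?_⟩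
  intro b hb
  have hgen : Generates L (fun i => e.symm (b i)) := generates_comp_equiv e.symm hb
  have htp : tpv (L := L) (fun i => e.symm (b i)) = tpv (L := L) b :=
    tpv_comp_equiv e.symm b
  exact supported_of_tpv_eq htp (h3 _ hgen)

/-- Unranked generated pairs stay in every class. -/
lemma stay_of_unranked {P : Σ M : Theory.ModelType.{0,0,0} T, Fin n → M}
    (hg : Generates L P.2) (hunr : ∀ β : Ordinal.{0}, ¬ RankEq T n β P.1) :
    ∀ γ : Ordinal.{0}, P ∈ Kclass T n γ := by
  intro γ
  rw [mem_kclass_iff]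
  refine ⟨hg, ?_⟩
  intro β _ N hN b hb hsub
  obtain ⟨e, -⟩ := exists_equiv_of_tpv_subset hb hg hsub
  exact hunr β (rankEq_of_equiv e hN)

variable (L T n) in
/-- The set of complete types realized in `K(T|P_{n,γ})`. -/
def Sset (γ : Ordinal.{0}) : Set (Set (L.Formula (Fin n))) :=
  { q | ∃ P ∈ Kclass T n γ, tpv (L := L) P.2 = q }

lemma sset_antitone {γ γ' : Ordinal.{0}} (h : γ ≤ γ') : Sset L T n γ' ⊆ Sset L T n γ := by
  rintro q ⟨P, hP, rfl⟩
  exact ⟨P, kclass_antitone h hP, rfl⟩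

variable (L n) in
/-- Isolation of a type within a set of types. -/
def Isol (S : Set (Set (L.Formula (Fin n)))) (q : Set (L.Formula (Fin n))) : Prop :=
  ∃ ψ : L.Formula (Fin n), (∃ q' ∈ S, ψ ∈ q') ∧ ∀ q' ∈ S, ψ ∈ q' → q' = q

lemma sumElim_fin0 {C : Type*} (f : Fin n → C) (v : Fin 0 → C) :
    Sum.elim f v = f ∘ Sum.elim id (Fin.elim0 : Fin 0 → Fin n) := by
  funext z
  rcases z with i | j
  · rfl
  · exact j.elim0

lemma supported_iff_isol {γ : Ordinal.{0}} {M : Type*} [L.Structure M] {a : Fin n → M} :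
    Supported (T := T) (Kclass T n γ) (ctype a) ↔
      Isol L n (Sset L T n γ) (tpv (L := L) a) := by
  constructor
  · rintro ⟨φ, ⟨P, hP, v, hv⟩, hforce⟩
    refine ⟨φ.relabel (Sum.elim id Fin.elim0), ⟨tpv (L := L) P.2, ⟨P, hP, rfl⟩, ?_⟩, ?_⟩
    · show (φ.relabel (Sum.elim id Fin.elim0)).Realize P.2
      erw [Formula.realize_relabel, ← sumElim_fin0 P.2 v]
      exact hv
    · rintro q' ⟨Q, hQ, rfl⟩ hψ
      have hφQ : φ.Realize (Sum.elim Q.2 (Fin.elim0 : Fin 0 → Q.1)) := by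
        erw [sumElim_fin0]
        have hpsi : (φ.relabel (Sum.elim id Fin.elim0)).Realize Q.2 := hψ
        erw [Formula.realize_relabel] at hpsi
        exact hpsi
      have hreal : RealizesNType (L := L) Q.2 (ctype a) :=
        ⟨Fin.elim0, hforce Q hQ Fin.elim0 hφQ⟩
      exact (tpv_eq_of_subset (realizesNType_ctype_iff.1 hreal)).symm
  · rintro ⟨ψ, ⟨q', ⟨P, hP, rfl⟩, hψP⟩, hforce⟩
    refine ⟨ψ.relabel Sum.inl, ⟨P, hP, Fin.elim0, ?_⟩, ?_⟩
    · erw [Formula.realize_relabel, Sum.elim_comp_inl]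
      exact hψP
    · intro Q hQ v hv χ hχ
      obtain ⟨ξ, hξ, rfl⟩ := hχ
      erw [Formula.realize_relabel, Sum.elim_comp_inl] at hv ⊢
      have heq2 : tpv (L := L) Q.2 = tpv (L := L) a := hforce _ ⟨Q, hQ, rfl⟩ hv
      exact (Set.ext_iff.1 heq2 ξ).2 hξ

/-- Stabilization of the decreasing family `Sset`. -/
lemma exists_stab : ∃ α : Ordinal.{0}, ∀ γ : Ordinal.{0}, α ≤ γ →
    Sset L T n γ = Sset L T n α := by
  classical
  by_cases hrem : ∃ q : Set (L.Formula (Fin n)), ∃ γ, q ∉ Sset L T n γ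
  · set I := {q : Set (L.Formula (Fin n)) // ∃ γ, q ∉ Sset L T n γ} with hI
    have hne : ∀ q : I, {γ : Ordinal.{0} | q.1 ∉ Sset L T n γ}.Nonempty := fun q => q.2
    set rm : I → Ordinal.{0} := fun q => sInf {γ | q.1 ∉ Sset L T n γ} with hrm
    have hrmem : ∀ q : I, q.1 ∉ Sset L T n (rm q) := fun q => csInf_mem (hne q)
    refine ⟨iSup rm, ?_⟩
    intro γ hγ
    apply Set.Subset.antisymm (sset_antitone hγ)
    intro q hq
    by_contra hqγ
    have hrmq : rm ⟨q, ⟨γ, hqγ⟩⟩ ≤ iSup rm := le_ciSup (Ordinal.bddAbove_range rm) _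
    exact (hrmem ⟨q, ⟨γ, hqγ⟩⟩) (sset_antitone hrmq hq)
  · push_neg at hrem
    exact ⟨0, fun γ _ => Set.eq_of_subset_of_subset (sset_antitone (show (0 : Ordinal.{0}) ≤ γ from zero_le))
      (fun q _ => hrem q γ)⟩

end Rank

section MkFormulas

variable {n : ℕ} {M : Type*} [L.Structure M]

/-- `φ(t₀,…,tₘ)` : substituting terms for all variables of `φ : BoundedFormula Empty (m+1)`. -/
def instF (m : ℕ) (φ : L.BoundedFormula Empty (m + 1)) (ts : Fin (m + 1) → L.Term (Fin n)) :
    L.Formula (Fin n) :=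
  φ.toFormula.subst (Sum.elim (fun e => e.elim) ts)

lemma realize_instF {m : ℕ} {φ : L.BoundedFormula Empty (m + 1)}
    {ts : Fin (m + 1) → L.Term (Fin n)} {v : Fin n → M} :
    (instF m φ ts).Realize v ↔ φ.Realize default (fun j => (ts j).realize v) := by
  unfold instF
  rw [Formula.Realize, BoundedFormula.realize_subst]
  have h := BoundedFormula.realize_toFormula φ
    (fun a => (Sum.elim (fun e : Empty => e.elim) ts a).realize v)
  rw [Formula.Realize] at h
  rw [h]
  congr! 1

/-- `∃ y, φ(t₀,…,tₘ₋₁, y)`. -/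
def exF (m : ℕ) (φ : L.BoundedFormula Empty (m + 1)) (ts : Fin m → L.Term (Fin n)) :
    L.Formula (Fin n) :=
  ((φ.toFormula.subst (Sum.elim (fun e => e.elim)
      (Fin.snoc (fun j => (ts j).relabel Sum.inl) (Term.var (Sum.inr 0))))).relabel
      (id : Fin n ⊕ Fin 1 → Fin n ⊕ Fin 1)).ex

lemma realize_exF {m : ℕ} {φ : L.BoundedFormula Empty (m + 1)}
    {ts : Fin m → L.Term (Fin n)} {v : Fin n → M} :
    (exF m φ ts).Realize v ↔
      ∃ y : M, φ.Realize default (Fin.snoc (fun j => (ts j).realize v) y) := by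
  unfold exF
  rw [Formula.Realize, BoundedFormula.realize_ex]
  apply exists_congr
  intro y
  rw [BoundedFormula.realize_relabel, BoundedFormula.realize_subst,
    show ((Fin.snoc default y : Fin (0 + 1) → M) ∘ Fin.natAdd 1) = (default : Fin 0 → M) from
      Subsingleton.elim _ _]
  refine (BoundedFormula.realize_toFormula _ _).trans (iff_of_eq ?_)
  congr 1
  · exact Subsingleton.elim _ _
  · funext j
    induction j using Fin.lastCases with
    | last => simp [Fin.snoc]
    | cast j => simp [Fin.snoc_castSucc, Term.realize_relabel, Sum.elim_comp_inl]

end MkFormulas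

section Countability

variable {T : L.Theory} {n : ℕ}

variable (L T n) in
/-- The set of complete types of generating tuples of `n`-generated models of `T`. -/
def AllTypes : Set (Set (L.Formula (Fin n))) :=
  { q | ∃ P : Σ M : Theory.ModelType.{0, 0, 0} T, Fin n → M,
      Generates L P.2 ∧ tpv (L := L) P.2 = q }

lemma countable_of_generates {M : Type*} [L.Structure M] [Countable L.Symbols]
    {a : Fin n → M} (ha : Generates L a) : Countable M := by
  have : Function.Surjective (fun t : L.Term (Fin n) => t.realize a) := fun y => ha y
  exact this.countable

lemma countable_allTypes [Countable L.Symbols] (hα : alphaCard L T n ≤ Cardinal.aleph0) :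
    (AllTypes L T n).Countable := by
  classical
  have hquot : Countable (Quotient (isoSetoid (L := L) (T := T) (n := n))) :=
    Cardinal.mk_le_aleph0_iff.1 hα
  have hcover : AllTypes L T n ⊆
      ⋃ c : Quotient (isoSetoid (L := L) (T := T) (n := n)),
        {q | ∃ a : Fin n → (c.out.1 : Type), Generates L a ∧ tpv (L := L) a = q} := by
    rintro q ⟨P, hgen, rfl⟩
    have hmem : (⟨P.1, P.2, hgen⟩ : NGenModel L T n) ∈ (Set.univ : Set (NGenModel L T n)) :=
      Set.mem_univ _
    set W : NGenModel L T n := ⟨P.1, P.2, hgen⟩ with hW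
    refine Set.mem_iUnion.2 ⟨⟦W⟧, ?_⟩
    obtain ⟨e⟩ : Nonempty ((Quotient.out ⟦W⟧).1 ≃[L] W.1) := Quotient.mk_out W
    refine ⟨fun i => e.symm (P.2 i), generates_comp_equiv e.symm hgen, ?_⟩
    exact tpv_comp_equiv e.symm P.2
  refine Set.Countable.mono hcover ?_
  refine Set.countable_iUnion fun c => ?_
  have hc : Countable (c.out.1 : Type) := by
    obtain ⟨a, ha⟩ := c.out.2
    exact countable_of_generates ha
  have : {q | ∃ a : Fin n → (c.out.1 : Type), Generates L a ∧ tpv (L := L) a = q} ⊆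
      Set.range (fun a : Fin n → (c.out.1 : Type) => tpv (L := L) a) := by
    rintro q ⟨a, -, rfl⟩
    exact ⟨a, rfl⟩
  exact Set.Countable.mono this (Set.countable_range _)

lemma countable_formulas [Countable L.Symbols] : Countable (L.Formula (Fin n)) := by
  have h := BoundedFormula.card_le (L := L) (α := Fin n)
  have : Countable (Σ k : ℕ, L.BoundedFormula (Fin n) k) := by
    refine Cardinal.mk_le_aleph0_iff.1 (h.trans ?_)
    rw [max_le_iff]
    refine ⟨le_refl _, ?_⟩
    have h1 : Cardinal.lift.{0} #(Fin n) ≤ Cardinal.aleph0 := by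
      simp [Cardinal.mk_fin]
    have h2 : L.card ≤ Cardinal.aleph0 := by
      rw [Language.card]
      exact Cardinal.mk_le_aleph0
    calc Cardinal.lift.{0} #(Fin n) + Cardinal.lift.{0} L.card
        ≤ Cardinal.aleph0 + Cardinal.aleph0 := by
          refine add_le_add h1 ?_
          simpa using h2
      _ = Cardinal.aleph0 := Cardinal.aleph0_add_aleph0
  exact (sigma_mk_injective (i := 0)).countable

end Countability

section Main

variable {T : L.Theory} {n : ℕ}

lemma unranked_of_mem_kclass {αs : Ordinal.{0}}
    (hstab : ∀ γ : Ordinal.{0}, αs ≤ γ → Sset L T n γ = Sset L T n αs)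
    {P : Σ M : Theory.ModelType.{0, 0, 0} T, Fin n → M} (hP : P ∈ Kclass T n αs) :
    ∀ β : Ordinal.{0}, ¬ RankEq T n β P.1 := by
  intro β hr
  rcases lt_or_ge β αs with hβ | hβ
  · exact not_mem_kclass_of_rank (gen_of_mem_kclass hP) hr hβ hP
  · have h1 : tpv (L := L) P.2 ∈ Sset L T n (Order.succ β) := by
      rw [hstab (Order.succ β) (hβ.trans (Order.le_succ β))]
      exact ⟨P, hP, rfl⟩
    obtain ⟨Q, hQ, hQtp⟩ := h1
    have hsub : tpv (L := L) P.2 ⊆ tpv (L := L) Q.2 := by rw [hQtp]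
    obtain ⟨e, -⟩ :=
      exists_equiv_of_tpv_subset (gen_of_mem_kclass hP) (gen_of_mem_kclass hQ) hsub
    exact not_mem_kclass_of_rank (gen_of_mem_kclass hQ) (rankEq_of_equiv e hr)
      (Order.lt_succ β) hQ

lemma dense_sset {αs : Ordinal.{0}}
    (hstab : ∀ γ : Ordinal.{0}, αs ≤ γ → Sset L T n γ = Sset L T n αs) :
    ∀ q ∈ Sset L T n αs, ∀ ψ ∈ q, ∃ q' ∈ Sset L T n αs, q' ≠ q ∧ ψ ∈ q' := by
  classical
  rintro q ⟨P, hP, rfl⟩ ψ hψ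
  have hunr := unranked_of_mem_kclass hstab hP
  have hnr : ¬ RankEq T n (Order.succ αs) P.1 := hunr _
  rw [rankEq_iff] at hnr
  have h1le : (1 : Ordinal.{0}) ≤ Order.succ αs := by
    rw [Order.one_le_iff_pos]
    exact lt_of_le_of_lt (show (0 : Ordinal.{0}) ≤ αs from zero_le) (Order.lt_succ αs)
  have hex : ∃ a0 : Fin n → P.1, Generates L a0 := ⟨P.2, gen_of_mem_kclass hP⟩
  have h3 : ¬ ∀ b : Fin n → P.1, Generates L b →
      Supported (Kclass T n (Order.succ αs)) (ctype b) :=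
    fun h => hnr ⟨h1le, hex, h⟩
  push_neg at h3
  obtain ⟨b, hbgen, hbsup⟩ := h3
  rw [supported_iff_isol, hstab _ (Order.le_succ αs)] at hbsup
  have hPiso : ¬ Isol L n (Sset L T n αs) (tpv (L := L) P.2) := by
    rintro ⟨φ, ⟨q0, hq0S, hφq0⟩, hforce⟩
    have hq0 : q0 = tpv (L := L) P.2 := hforce _ hq0S hφq0
    have hφP : φ ∈ tpv (L := L) P.2 := hq0 ▸ hφq0
    choose t ht using fun i => hbgen (P.2 i)
    choose s hs using fun i => (gen_of_mem_kclass hP) (b i)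
    set χ : L.Formula (Fin n) :=
      (φ.subst t) ⊓ (BoundedFormula.iInf
        (fun i => Term.equal (Term.var i) ((s i).subst t))) with hχdef
    have hreal_χ : ∀ {C : Type} [L.Structure C] (v : Fin n → C), χ.Realize v ↔
        (φ.Realize (fun i => (t i).realize v) ∧ ∀ i, v i = (s i).realize
          (fun j => (t j).realize v)) := by
      intro C _ v
      rw [hχdef]
      rw [Formula.realize_inf]
      apply and_congr
      · rw [Formula.Realize, BoundedFormula.realize_subst]
        exact Iff.rfl
      · rw [Formula.Realize, BoundedFormula.realize_iInf]
        constructor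
        · intro h i
          have h3 : ((Term.var i).equal ((s i).subst t) : L.Formula (Fin n)).Realize v :=
            h i
          rw [Formula.realize_equal] at h3
          simpa [Term.realize_subst] using h3
        · intro h i
          have h3 : ((Term.var i).equal ((s i).subst t) : L.Formula (Fin n)).Realize v := by
            rw [Formula.realize_equal]
            simpa [Term.realize_subst] using h i
          exact h3
    apply hbsup
    have htb : (fun i => (t i).realize b) = P.2 := funext ht
    have hsP : (fun i => (s i).realize P.2) = b := funext hs
    refine ⟨χ, ⟨tpv (L := L) b, ⟨⟨P.1, b⟩, stay_of_unranked (P := ⟨P.1, b⟩) hbgen hunr αs, rfl⟩, ?_⟩, ?_⟩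
    · show χ.Realize b
      rw [hreal_χ]
      constructor
      · rw [htb]; exact hφP
      · intro i
        rw [htb]
        exact (hs i).symm
    · rintro q' ⟨Q, hQ, rfl⟩ hχq'
      have hχQ : χ.Realize Q.2 := hχq'
      rw [hreal_χ] at hχQ
      set d : Fin n → Q.1 := fun i => (t i).realize Q.2 with hd
      have hφd : φ.Realize d := hχQ.1
      have hQ2 : Q.2 = fun i => (s i).realize d := funext fun i => hχQ.2 i
      have hdgen : Generates L d := by
        intro y
        obtain ⟨u, hu⟩ := gen_of_mem_kclass hQ y
        refine ⟨u.subst s, ?_⟩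
        rw [Term.realize_subst]
        rw [hQ2] at hu
        exact hu
      have hQd : (⟨Q.1, d⟩ : Σ M : Theory.ModelType.{0, 0, 0} T, Fin n → M) ∈
          Kclass T n αs :=
        stay_of_unranked (P := ⟨Q.1, d⟩) hdgen (unranked_of_mem_kclass (P := Q) hstab hQ) αs
      have htpd : tpv (L := L) d = tpv (L := L) P.2 :=
        hforce _ ⟨⟨Q.1, d⟩, hQd, rfl⟩ hφd
      ext χ'
      constructor
      · intro hmem
        have h1 : χ'.Realize Q.2 := hmem
        rw [hQ2] at h1
        have h2 : Formula.Realize (L := L) (χ'.subst s) d := by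
          rw [Formula.Realize, BoundedFormula.realize_subst]
          exact h1
        have h3 : (χ'.subst s) ∈ tpv (L := L) P.2 := htpd ▸ h2
        have h4 : Formula.Realize (L := L) (χ'.subst s) P.2 := h3
        rw [Formula.Realize, BoundedFormula.realize_subst] at h4
        show χ'.Realize b
        rw [← hsP]
        exact h4
      · intro hmem
        have h4 : χ'.Realize b := hmem
        rw [← hsP] at h4
        have h3 : Formula.Realize (L := L) (χ'.subst s) P.2 := by
          rw [Formula.Realize, BoundedFormula.realize_subst]
          exact h4
        have h2 : (χ'.subst s) ∈ tpv (L := L) d := htpd.symm ▸ (h3 : (χ'.subst s) ∈ tpv (L := L) P.2)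
        have h1 : Formula.Realize (L := L) (χ'.subst s) d := h2
        rw [Formula.Realize, BoundedFormula.realize_subst] at h1
        show χ'.Realize Q.2
        rw [hQ2]
        exact h1
  rw [Isol] at hPiso
  push_neg at hPiso
  obtain ⟨q', hq'S, hψq', hne⟩ := hPiso ψ ⟨tpv (L := L) P.2, ⟨P, hP, rfl⟩, hψ⟩
  exact ⟨q', hq'S, hne, hψq'⟩

end Main

section Construction

variable {T : L.Theory} {n : ℕ}

lemma snoc_realize {C : Type*} [L.Structure C] {m : ℕ} (ts : Fin m → L.Term (Fin n))
    (u : L.Term (Fin n)) (v : Fin n → C) :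
    (fun j => ((Fin.snoc ts u : Fin (m + 1) → L.Term (Fin n)) j).realize v) =
      Fin.snoc (fun j => (ts j).realize v) (u.realize v) := by
  funext j
  induction j using Fin.lastCases with
  | last => simp [Fin.snoc_last]
  | cast j => simp [Fin.snoc_castSucc]

lemma countable_boundedFormula [Countable L.Symbols] {α : Type} [Countable α] (k : ℕ) :
    Countable (L.BoundedFormula α k) := by
  have h := BoundedFormula.card_le (L := L) (α := α)
  have hsig : Countable (Σ j : ℕ, L.BoundedFormula α j) := by
    refine Cardinal.mk_le_aleph0_iff.1 (h.trans ?_)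
    rw [max_le_iff]
    refine ⟨le_refl _, ?_⟩
    have h1 : Cardinal.lift.{0} #α ≤ Cardinal.aleph0 := by
      simpa using (Cardinal.mk_le_aleph0 : #α ≤ Cardinal.aleph0)
    have h2 : L.card ≤ Cardinal.aleph0 := by
      rw [Language.card]
      exact Cardinal.mk_le_aleph0
    calc Cardinal.lift.{0} #α + Cardinal.lift.{0} L.card
        ≤ Cardinal.aleph0 + Cardinal.aleph0 := by
          refine add_le_add h1 ?_
          simpa using h2
      _ = Cardinal.aleph0 := Cardinal.aleph0_add_aleph0
  exact (sigma_mk_injective (i := k)).countable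

/-- Every `n`-generated model of `T` has a rank, provided `T` has at most countably many
`n`-generated models. -/
lemma exists_rank [Countable L.Symbols] (hα : alphaCard L T n ≤ Cardinal.aleph0)
    (M : Theory.ModelType.{0, 0, 0} T) (a : Fin n → M) (ha : Generates L a) :
    ∃ γ : Ordinal.{0}, RankEq T n γ M := by
  classical
  by_contra hno
  push_neg at hno
  obtain ⟨αs, hstab⟩ := exists_stab (L := L) (T := T) (n := n)
  have hMK : ∀ γ : Ordinal.{0},
      (⟨M, a⟩ : Σ M' : Theory.ModelType.{0, 0, 0} T, Fin n → M') ∈ Kclass T n γ :=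
    stay_of_unranked (P := ⟨M, a⟩) ha hno
  have haS : tpv (L := L) a ∈ Sset L T n αs := ⟨⟨M, a⟩, hMK αs, rfl⟩
  have hdense := dense_sset hstab
  -- basic facts about members of `Sset`
  have hql : ∀ q ∈ Sset L T n αs, ∃ Q : Σ M' : Theory.ModelType.{0, 0, 0} T, Fin n → M',
      Q ∈ Kclass T n αs ∧ tpv (L := L) Q.2 = q := by
    rintro q ⟨Q, hQ, rfl⟩
    exact ⟨Q, hQ, rfl⟩
  have hqnot : ∀ q ∈ Sset L T n αs, ∀ χ : L.Formula (Fin n), χ ∉ q ↔ χ.not ∈ q := by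
    rintro q ⟨Q, hQ, rfl⟩ χ
    exact not_mem_tpv
  have hrnot : ∀ q ∈ AllTypes L T n, ∀ χ : L.Formula (Fin n), χ ∉ q ↔ χ.not ∈ q := by
    rintro q ⟨Q, hQgen, rfl⟩ χ
    exact not_mem_tpv
  have hinf : ∀ q ∈ Sset L T n αs, ∀ χ ξ : L.Formula (Fin n),
      χ ⊓ ξ ∈ q ↔ (χ ∈ q ∧ ξ ∈ q) := by
    rintro q ⟨Q, hQ, rfl⟩ χ ξ
    exact Formula.realize_inf
  -- enumerations
  have hAc : (AllTypes L T n).Countable := countable_allTypes hα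
  have hAne : (AllTypes L T n).Nonempty := ⟨tpv (L := L) a, ⟨⟨M, a⟩, ha, rfl⟩⟩
  obtain ⟨r, hr⟩ := hAc.exists_eq_range hAne
  haveI : Countable (L.Formula (Fin n)) := countable_formulas
  haveI : Nonempty (L.Formula (Fin n)) := ⟨⊥⟩
  obtain ⟨g, hg⟩ := exists_surjective_nat (L.Formula (Fin n))
  haveI : ∀ m : ℕ, Countable (L.BoundedFormula Empty (m + 1)) := fun m =>
    countable_boundedFormula _
  haveI : Countable (Σ m : ℕ, L.BoundedFormula Empty (m + 1) × (Fin m → L.Term (Fin n))) := by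
    infer_instance
  haveI : Nonempty (Σ m : ℕ, L.BoundedFormula Empty (m + 1) × (Fin m → L.Term (Fin n))) :=
    ⟨⟨0, ⊥, Fin.elim0⟩⟩
  obtain ⟨hk, hhk⟩ :=
    exists_surjective_nat (Σ m : ℕ, L.BoundedFormula Empty (m + 1) × (Fin m → L.Term (Fin n)))
  -- the three moves
  set Good : L.Formula (Fin n) → Prop := fun φ => ∃ q ∈ Sset L T n αs, φ ∈ q with hGood
  set Fc : L.Formula (Fin n) → L.Formula (Fin n) → Prop :=
    fun φ ψ => ∀ q ∈ Sset L T n αs, φ ∈ q → ψ ∈ q with hFc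
  have moveDiag : ∀ φ, Good φ → ∀ rr ∈ AllTypes L T n, ∃ φ', Good φ' ∧ Fc φ' φ ∧
      ∃ ψ, Fc φ' ψ ∧ ψ ∉ rr := by
    rintro φ ⟨q, hqS, hφq⟩ rr hrr
    have hstep1 : ∃ q' ∈ Sset L T n αs, φ ∈ q' ∧ q' ≠ rr := by
      by_cases h : q = rr
      · obtain ⟨q', hq'S, hne, hφq'⟩ := hdense q hqS φ hφq
        exact ⟨q', hq'S, hφq', h ▸ hne⟩
      · exact ⟨q, hqS, hφq, h⟩
    obtain ⟨q', hq'S, hφq', hne⟩ := hstep1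
    have hstep2 : ∃ χ, χ ∈ q' ∧ χ ∉ rr := by
      by_contra h
      push_neg at h
      apply hne
      apply Set.Subset.antisymm (fun χ hχ => h χ hχ)
      intro χ hχrr
      by_contra hχq'
      have h1 : χ.not ∈ q' := (hqnot q' hq'S χ).1 hχq'
      have h2 : χ.not ∈ rr := h _ h1
      exact ((hrnot rr hrr χ).2 h2) hχrr
    obtain ⟨χ, hχq', hχrr⟩ := hstep2
    refine ⟨φ ⊓ χ, ⟨q', hq'S, (hinf q' hq'S φ χ).2 ⟨hφq', hχq'⟩⟩, ?_, χ, ?_, hχrr⟩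
    · intro q0 h0 hm
      exact ((hinf q0 h0 φ χ).1 hm).1
    · intro q0 h0 hm
      exact ((hinf q0 h0 φ χ).1 hm).2
  have moveDecide : ∀ φ, Good φ → ∀ χ, ∃ φ', Good φ' ∧ Fc φ' φ ∧ (Fc φ' χ ∨ Fc φ' χ.not) := by
    rintro φ ⟨q, hqS, hφq⟩ χ
    by_cases h : χ ∈ q
    · refine ⟨φ ⊓ χ, ⟨q, hqS, (hinf q hqS φ χ).2 ⟨hφq, h⟩⟩, ?_, Or.inl ?_⟩
      · intro q0 h0 hm
        exact ((hinf q0 h0 φ χ).1 hm).1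
      · intro q0 h0 hm
        exact ((hinf q0 h0 φ χ).1 hm).2
    · have h1 : χ.not ∈ q := (hqnot q hqS χ).1 h
      refine ⟨φ ⊓ χ.not, ⟨q, hqS, (hinf q hqS φ χ.not).2 ⟨hφq, h1⟩⟩, ?_, Or.inr ?_⟩
      · intro q0 h0 hm
        exact ((hinf q0 h0 φ χ.not).1 hm).1
      · intro q0 h0 hm
        exact ((hinf q0 h0 φ χ.not).1 hm).2
  have moveHenkin : ∀ φ, Good φ → ∀ (m : ℕ) (θ : L.BoundedFormula Empty (m + 1))
      (ts : Fin m → L.Term (Fin n)), ∃ φ', Good φ' ∧ Fc φ' φ ∧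
      (Fc φ' ((exF m θ ts).not) ∨ ∃ u, Fc φ' (instF m θ (Fin.snoc ts u))) := by
    rintro φ hGoodφ m θ ts
    by_cases h : ∃ q' ∈ Sset L T n αs, φ ∈ q' ∧ exF m θ ts ∈ q'
    · obtain ⟨q', hq'S, hφq', hexm⟩ := h
      obtain ⟨Q, hQ, rfl⟩ := hql q' hq'S
      have hexQ : (exF m θ ts).Realize Q.2 := hexm
      rw [realize_exF] at hexQ
      obtain ⟨y, hy⟩ := hexQ
      obtain ⟨u, hu⟩ := gen_of_mem_kclass hQ y
      have hinst : (instF m θ (Fin.snoc ts u)).Realize Q.2 := by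
        rw [realize_instF, snoc_realize, hu]
        exact hy
      refine ⟨φ ⊓ instF m θ (Fin.snoc ts u),
        ⟨tpv (L := L) Q.2, ⟨Q, hQ, rfl⟩, (hinf _ ⟨Q, hQ, rfl⟩ _ _).2 ⟨hφq', hinst⟩⟩,
        ?_, Or.inr ⟨u, ?_⟩⟩
      · intro q0 h0 hm
        exact ((hinf q0 h0 _ _).1 hm).1
      · intro q0 h0 hm
        exact ((hinf q0 h0 _ _).1 hm).2
    · push_neg at h
      refine ⟨φ, hGoodφ, fun q0 h0 hm => hm, Or.inl ?_⟩
      intro q0 h0 hm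
      exact (hqnot q0 h0 _).1 (h q0 h0 hm)
  -- the combined step
  have hstep : ∀ (k : ℕ) (φ : {φ : L.Formula (Fin n) // Good φ}),
      ∃ φ' : {φ : L.Formula (Fin n) // Good φ}, Fc φ'.1 φ.1 ∧
        (∃ ψ, Fc φ'.1 ψ ∧ ψ ∉ r k) ∧
        (Fc φ'.1 (g k) ∨ Fc φ'.1 (g k).not) ∧
        (Fc φ'.1 ((exF (hk k).1 (hk k).2.1 (hk k).2.2).not) ∨
          ∃ u, Fc φ'.1 (instF (hk k).1 (hk k).2.1 (Fin.snoc (hk k).2.2 u))) := by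
    intro k φ
    have hrk : r k ∈ AllTypes L T n := by
      rw [hr]
      exact Set.mem_range_self k
    obtain ⟨φ1, hG1, hS1, ψd, hψd, hψdr⟩ := moveDiag φ.1 φ.2 (r k) hrk
    obtain ⟨φ2, hG2, hS2, hdec⟩ := moveDecide φ1 hG1 (g k)
    obtain ⟨φ3, hG3, hS3, hhen⟩ := moveHenkin φ2 hG2 (hk k).1 (hk k).2.1 (hk k).2.2
    have hS31 : Fc φ3 φ1 := fun q0 h0 hm => hS2 q0 h0 (hS3 q0 h0 hm)
    refine ⟨⟨φ3, hG3⟩, ?_, ⟨ψd, ?_, hψdr⟩, ?_, hhen⟩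
    · intro q0 h0 hm
      exact hS1 q0 h0 (hS31 q0 h0 hm)
    · intro q0 h0 hm
      exact hψd q0 h0 (hS31 q0 h0 hm)
    · rcases hdec with hdec | hdec
      · exact Or.inl fun q0 h0 hm => hdec q0 h0 (hS3 q0 h0 hm)
      · exact Or.inr fun q0 h0 hm => hdec q0 h0 (hS3 q0 h0 hm)
  choose step hstepS hstepD hstepG hstepH using hstep
  have hGood0 : Good ((⊥ : L.Formula (Fin n)).not) := by
    refine ⟨tpv (L := L) a, haS, ?_⟩
    show ((⊥ : L.Formula (Fin n)).not).Realize a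
    rw [Formula.realize_not]
    exact fun hbot => hbot
  set Φ : ℕ → {φ : L.Formula (Fin n) // Good φ} := fun k =>
    Nat.rec ⟨(⊥ : L.Formula (Fin n)).not, hGood0⟩ (fun k ih => step k ih) k with hΦ
  have hΦsucc : ∀ k, Φ (k + 1) = step k (Φ k) := fun k => rfl
  have hchain : ∀ k j, j ≤ k → Fc (Φ k).1 (Φ j).1 := by
    intro k
    induction k with
    | zero =>
      intro j hj
      rw [Nat.le_zero.1 hj]
      exact fun q0 h0 hm => hm
    | succ k ih =>
      intro j hj
      rcases Nat.lt_or_ge j (k + 1) with h | h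
      · have hjk : j ≤ k := Nat.lt_succ_iff.1 h
        have h1 : Fc (Φ (k + 1)).1 (Φ k).1 := by
          rw [hΦsucc]
          exact hstepS k (Φ k)
        exact fun q0 h0 hm => ih j hjk q0 h0 (h1 q0 h0 hm)
      · rw [le_antisymm hj h]
        exact fun q0 h0 hm => hm
  set qstar : Set (L.Formula (Fin n)) := {ψ | ∃ k : ℕ, Fc (Φ k).1 ψ} with hqstar
  have hfin : ∀ k, ∃ Q : Σ M' : Theory.ModelType.{0, 0, 0} T, Fin n → M',
      Q ∈ Kclass T n αs ∧ (Φ k).1 ∈ tpv (L := L) Q.2 := by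
    intro k
    obtain ⟨q, hqS, hm⟩ := (Φ k).2
    obtain ⟨Q, hQ, rfl⟩ := hql q hqS
    exact ⟨Q, hQ, hm⟩
  have hmono : ∀ (j k : ℕ), j ≤ k → ∀ ψ, Fc (Φ j).1 ψ → Fc (Φ k).1 ψ := by
    intro j k hjk ψ hψ q0 h0 hm
    exact hψ q0 h0 (hchain k j hjk q0 h0 hm)
  have hpair : ∀ (k1 k2 : ℕ) (ψ1 ψ2 : L.Formula (Fin n)), Fc (Φ k1).1 ψ1 → Fc (Φ k2).1 ψ2 →
      ∃ Q : Σ M' : Theory.ModelType.{0, 0, 0} T, Fin n → M', Q ∈ Kclass T n αs ∧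
        ψ1 ∈ tpv (L := L) Q.2 ∧ ψ2 ∈ tpv (L := L) Q.2 := by
    intro k1 k2 ψ1 ψ2 h1 h2
    obtain ⟨Q, hQ, hΦQ⟩ := hfin (max k1 k2)
    have hS : tpv (L := L) Q.2 ∈ Sset L T n αs := ⟨Q, hQ, rfl⟩
    exact ⟨Q, hQ, hmono k1 _ (le_max_left _ _) ψ1 h1 _ hS hΦQ,
      hmono k2 _ (le_max_right _ _) ψ2 h2 _ hS hΦQ⟩
  have hcons : ∀ χ : L.Formula (Fin n), ¬(χ ∈ qstar ∧ χ.not ∈ qstar) := by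
    rintro χ ⟨⟨k1, h1⟩, ⟨k2, h2⟩⟩
    obtain ⟨Q, hQ, hm1, hm2⟩ := hpair k1 k2 χ χ.not h1 h2
    have hr1 : χ.Realize Q.2 := hm1
    have hr2 : χ.not.Realize Q.2 := hm2
    rw [Formula.realize_not] at hr2
    exact hr2 hr1
  have hcompl : ∀ χ : L.Formula (Fin n), χ ∉ qstar → χ.not ∈ qstar := by
    intro χ hχ
    obtain ⟨k, rfl⟩ := hg χ
    have H := hstepG k (Φ k)
    rcases H with H | H
    · exact absurd ⟨k + 1, by rw [hΦsucc]; exact H⟩ hχ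
    · exact ⟨k + 1, by rw [hΦsucc]; exact H⟩
  have hHen : ∀ (m : ℕ) (θ : L.BoundedFormula Empty (m + 1)) (ts : Fin m → L.Term (Fin n)),
      exF m θ ts ∈ qstar → ∃ u, instF m θ (Fin.snoc ts u) ∈ qstar := by
    intro m θ ts hex
    obtain ⟨k, hkeq⟩ := hhk ⟨m, θ, ts⟩
    have H := hstepH k (Φ k)
    rw [hkeq] at H
    rcases H with H | ⟨u, H⟩
    · exact absurd ⟨hex, ⟨k + 1, by rw [hΦsucc]; exact H⟩⟩ (hcons _)
    · exact ⟨u, k + 1, by rw [hΦsucc]; exact H⟩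
  have hdiagq : ∀ k : ℕ, ∃ ψ, ψ ∈ qstar ∧ ψ ∉ r k := by
    intro k
    obtain ⟨ψ, hψ, hψr⟩ := hstepD k (Φ k)
    exact ⟨ψ, ⟨k + 1, by rw [hΦsucc]; exact hψ⟩, hψr⟩
  -- compactness
  set T2 : (L[[Fin n]]).Theory :=
    (L.lhomWithConstants (Fin n)).onTheory T ∪ (Formula.equivSentence '' qstar) with hT2
  have haux : ∀ T0 : Finset ((L[[Fin n]]).Sentence), ↑T0 ⊆ T2 →
      ∃ k : ℕ, ∀ σ ∈ T0, σ ∈ (L.lhomWithConstants (Fin n)).onTheory T ∨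
        ∃ χ, (Fc (Φ k).1 χ) ∧ Formula.equivSentence χ = σ := by
    intro T0
    refine Finset.induction_on T0 ?_ ?_
    · intro _
      exact ⟨0, fun σ hσ => absurd hσ (Finset.notMem_empty σ)⟩
    · rintro σ T0' hσni ih hins
      have hsub' : ↑T0' ⊆ T2 := fun x hx => hins (Finset.mem_insert_of_mem hx)
      obtain ⟨k0, hk0⟩ := ih hsub'
      have hσT2 : σ ∈ T2 := hins (Finset.mem_insert_self σ T0')
      rcases hσT2 with hσT | ⟨χ, hχq, rfl⟩
      · refine ⟨k0, fun τ hτ => ?_⟩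
        rcases Finset.mem_insert.1 hτ with rfl | hτ
        · exact Or.inl hσT
        · exact hk0 τ hτ
      · obtain ⟨kχ, hkχ⟩ := hχq
        refine ⟨max k0 kχ, fun τ hτ => ?_⟩
        rcases Finset.mem_insert.1 hτ with rfl | hτ
        · exact Or.inr ⟨χ, hmono kχ _ (le_max_right _ _) χ hkχ, rfl⟩
        · rcases hk0 τ hτ with h | ⟨χ', hχ', rfl⟩
          · exact Or.inl h
          · exact Or.inr ⟨χ', hmono k0 _ (le_max_left _ _) χ' hχ', rfl⟩
  have hsatfin : T2.IsFinitelySatisfiable := by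
    intro T0 hT0
    obtain ⟨k, hkT0⟩ := haux T0 hT0
    obtain ⟨Q, hQK, hΦQ⟩ := hfin k
    letI : (constantsOn (Fin n)).Structure Q.1 := constantsOn.structure Q.2
    haveI hmodel : (Q.1 : Type) ⊨ (T0 : (L[[Fin n]]).Theory) := by
      rw [Theory.model_iff]
      intro σ hσ
      rcases hkT0 σ hσ with h | ⟨χ, hχ, rfl⟩
      · haveI : (Q.1 : Type) ⊨ (L.lhomWithConstants (Fin n)).onTheory T :=
          (LHom.onTheory_model _ _).2 Q.1.is_model
        exact Theory.realize_sentence_of_mem _ h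
      · have hχQ : χ ∈ tpv (L := L) Q.2 := hχ _ ⟨Q, hQK, rfl⟩ hΦQ
        rw [Formula.realize_equivSentence]
        have hcon : (fun i => ((L.con i : (Q.1 : Type)))) = Q.2 := rfl
        rw [hcon]
        exact hχQ
    exact Theory.Model.isSatisfiable Q.1
  obtain ⟨W⟩ := Theory.isSatisfiable_iff_isFinitelySatisfiable.2 hsatfin
  letI : L.Structure W := (L.lhomWithConstants (Fin n)).reduct W
  haveI : (L.lhomWithConstants (Fin n)).IsExpansionOn (W : Type) :=
    LHom.isExpansionOn_reduct _ _
  haveI hWT : (W : Type) ⊨ T := by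
    have h1 : (W : Type) ⊨ (L.lhomWithConstants (Fin n)).onTheory T :=
      W.is_model.mono Set.subset_union_left
    exact (LHom.onTheory_model _ _).1 h1
  set c : Fin n → (W : Type) := fun i => ((L.con i : (W : Type))) with hc
  have hcreal : ∀ χ ∈ qstar, χ.Realize c := by
    intro χ hχ
    have h1 : (W : Type) ⊨ Formula.equivSentence χ :=
      Theory.realize_sentence_of_mem (T := T2) (Set.mem_union_right _ ⟨χ, hχ, rfl⟩)
    rwa [Formula.realize_equivSentence] at h1
  have htpc : tpv (L := L) c = qstar := by
    apply Set.Subset.antisymm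
    · intro χ hχ
      by_contra hq
      have h2 := hcompl χ hq
      have h3 := hcreal _ h2
      rw [Formula.realize_not] at h3
      exact h3 hχ
    · exact fun χ hχ => hcreal χ hχ
  set B : L.Substructure (W : Type) := Substructure.closure L (Set.range c) with hB
  have hpick : ∀ z : Set.range c, ∃ i : Fin n, c i = (z : (W : Type)) := fun z => z.2
  choose idx hidx using hpick
  have hBmem : ∀ x : (W : Type), x ∈ B ↔ ∃ t : L.Term (Fin n), t.realize c = x := by
    intro x
    rw [hB, Substructure.mem_closure_iff_exists_term]
    constructor
    · rintro ⟨t', rfl⟩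
      refine ⟨t'.relabel idx, ?_⟩
      rw [Term.realize_relabel]
      congr 1
      funext z
      exact hidx z
    · rintro ⟨t, rfl⟩
      refine ⟨t.relabel (fun i => ⟨c i, Set.mem_range_self i⟩), ?_⟩
      rw [Term.realize_relabel]
      rfl
  have htv : ∀ (m : ℕ) (ψ : L.BoundedFormula Empty (m + 1)) (x : Fin m → B) (y : (W : Type)),
      ψ.Realize default (Fin.snoc ((↑) ∘ x) y : _ → (W : Type)) →
        ∃ b : B, ψ.Realize default (Fin.snoc ((↑) ∘ x) b : _ → (W : Type)) := by
    intro m ψ x y hreal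
    have hxt : ∀ j, ∃ t : L.Term (Fin n), t.realize c = (x j : (W : Type)) :=
      fun j => (hBmem _).1 (x j).2
    choose ts hts using hxt
    have hex : (exF m ψ ts).Realize c := by
      rw [realize_exF]
      refine ⟨y, ?_⟩
      rw [show (fun j => (ts j).realize c) = (((↑) ∘ x) : Fin m → (W : Type)) from funext hts]
      exact hreal
    have hexq : exF m ψ ts ∈ qstar := by
      rw [← htpc]
      exact hex
    obtain ⟨u, hu⟩ := hHen m ψ ts hexq
    have hureal : (instF m ψ (Fin.snoc ts u)).Realize c := by
      have hmem : instF m ψ (Fin.snoc ts u) ∈ tpv (L := L) c := by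
        rw [htpc]
        exact hu
      exact hmem
    rw [realize_instF, snoc_realize] at hureal
    refine ⟨⟨u.realize c, (hBmem _).2 ⟨u, rfl⟩⟩, ?_⟩
    rw [show (((↑) ∘ x) : Fin m → (W : Type)) = (fun j => (ts j).realize c) from
      (funext hts).symm]
    exact hureal
  set ES := B.toElementarySubstructure htv with hES
  haveI hN1model : (ES : Type) ⊨ T := (ES.theory_model_iff T).2 hWT
  set N1 : T.ModelType := Theory.ModelType.of T (ES : Type) with hN1
  have hmemc : ∀ i, c i ∈ ES := fun i => Substructure.subset_closure (Set.mem_range_self i)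
  set c' : Fin n → (ES : Type) := fun i => ⟨c i, hmemc i⟩ with hc'
  have hrealc' : ∀ t : L.Term (Fin n), ((t.realize c' : (ES : Type)) : (W : Type)) =
      t.realize c := by
    intro t
    have h0 := HomClass.realize_term (g := B.subtype) (v := c') (t := t)
    exact h0.symm
  have hgenc' : Generates L c' := by
    intro y
    obtain ⟨t, ht⟩ := (hBmem (y : (W : Type))).1 y.2
    refine ⟨t, ?_⟩
    apply Subtype.ext
    rw [hrealc' t]
    exact ht
  have htpvc' : tpv (L := L) c' = tpv (L := L) c := by
    ext φ
    have h1 := ES.subtype.map_formula φ c'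
    exact h1.symm
  have hqA : qstar ∈ AllTypes L T n := by
    refine ⟨⟨N1, c'⟩, hgenc', ?_⟩
    show tpv (L := L) c' = qstar
    rw [htpvc', htpc]
  rw [hr] at hqA
  obtain ⟨k0, hk0⟩ := hqA
  obtain ⟨ψ0, hψ0q, hψ0r⟩ := hdiagq k0
  rw [hk0] at hψ0r
  exact hψ0r hψ0q

end Construction

end Paper

/-- For every generating tuple `ā` of an `n`-generated model `M` of `T`
(`T` `n`-consistent with at most `ℵ₀` classes of `n`-generated models), there is a formula
`φ` such that, for every model `N` of `T` generated by `b̄`, `(M, ā) ≅ (N, b̄)` iff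
`N ⊨ φ(b̄)` and `rk(N) ≥ rk(M)`. -/
theorem stmt_7 (L : FirstOrder.Language.{0, 0}) [Countable L.Symbols] (T : L.Theory)
    (n : ℕ) (hcons : Paper.NConsistent L T n)
    (hα : Paper.alphaCard L T n ≤ Cardinal.aleph0)
    (M : FirstOrder.Language.Theory.ModelType.{0, 0, 0} T)
    (a : Fin n → M) (ha : Paper.Generates L a) :
    ∃ φ : L.Formula (Fin n),
      ∀ (N : FirstOrder.Language.Theory.ModelType.{0, 0, 0} T) (b : Fin n → N),
        Paper.Generates L b →
        ((∃ e : (M : Type) ≃[L] (N : Type), ∀ i, e (a i) = b i) ↔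
          (φ.Realize b ∧
            ∀ γ : Ordinal, Paper.RankEq T n γ M → (⟨N, b⟩ : Σ N' : FirstOrder.Language.Theory.ModelType.{0, 0, 0} T, Fin n → N') ∈ Paper.Kclass T n γ)) := by
  classical
  obtain ⟨γ0, hγ0⟩ := Paper.exists_rank hα M a ha
  have hsup := (Paper.rankEq_iff.1 hγ0).2.2 a ha
  rw [Paper.supported_iff_isol] at hsup
  obtain ⟨ψ, ⟨q0, hq0S, hψq0⟩, hforce⟩ := hsup
  have hq0 : q0 = Paper.tpv (L := L) a := hforce _ hq0S hψq0
  have hψa : ψ ∈ Paper.tpv (L := L) a := hq0 ▸ hψq0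
  refine ⟨ψ, ?_⟩
  intro N b hb
  constructor
  · rintro ⟨e, he⟩
    have htpb' : Paper.tpv (L := L) b = Paper.tpv (L := L) a := by
      have h1 := Paper.tpv_comp_equiv (n := n) e a
      rw [show (fun i => e (a i)) = b from funext he] at h1
      exact h1
    constructor
    · exact (show ψ ∈ Paper.tpv (L := L) b by rw [htpb']; exact hψa)
    · intro γ hγ
      rw [Paper.mem_kclass_iff]
      refine ⟨hb, ?_⟩
      intro β hβ N' hN' b' hb' hsubtp
      have hsub2 : Paper.tpv (L := L) b' ⊆ Paper.tpv (L := L) a := by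
        rw [htpb'] at hsubtp
        exact hsubtp
      obtain ⟨e2, -⟩ := Paper.exists_equiv_of_tpv_subset hb' ha hsub2
      have hrankM : Paper.RankEq T n β M := Paper.rankEq_of_equiv e2 hN'
      have hsupγ := (Paper.rankEq_iff.1 hγ).2.2 a ha
      rw [Paper.supported_iff_isol] at hsupγ
      obtain ⟨ψ2, ⟨q2, hq2S, hψ2q2⟩, hforce2⟩ := hsupγ
      have hq2 : q2 = Paper.tpv (L := L) a := hforce2 _ hq2S hψ2q2
      obtain ⟨Q, hQ, hQtp⟩ := hq2S
      have hQa : Paper.tpv (L := L) Q.2 = Paper.tpv (L := L) a := by rw [hQtp, hq2]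
      obtain ⟨e3, -⟩ := Paper.exists_equiv_of_tpv_subset ha (Paper.gen_of_mem_kclass hQ)
        (by rw [hQa])
      have hrankQ : Paper.RankEq T n β Q.1 := Paper.rankEq_of_equiv e3 hrankM
      exact Paper.not_mem_kclass_of_rank (Paper.gen_of_mem_kclass hQ) hrankQ hβ hQ
  · rintro ⟨hψb, hK⟩
    have hKγ0 := hK γ0 hγ0
    have htpba : Paper.tpv (L := L) b = Paper.tpv (L := L) a :=
      hforce _ ⟨⟨N, b⟩, hKγ0, rfl⟩ hψb
    obtain ⟨e, he⟩ := Paper.exists_equiv_of_tpv_subset ha hb (by rw [htpba])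
    exact ⟨e, he⟩
end

section
/- Let T be an n-consistent theory in a countable language with at most ℵ₀ isomorphism classes of n-generated models. Then there exists an n-generated model M of T such that for every generating tuple ā of M there is a formula φ(x̄) with: for every finitely generated model N of T generated by b̄, (M, ā) ≅ (N, b̄) if and only if N ⊨ φ(b̄). -/
open FirstOrder FirstOrder.Language Cardinal

namespace Stmt8

open Paper

variable {L : FirstOrder.Language.{0, 0}} {n : ℕ}

/-- The complete (quantified) type of a tuple, as a set of formulas. -/
def ftype {M : Type*} [L.Structure M] (a : Fin n → M) : Set (L.Formula (Fin n)) :=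
  { ψ | ψ.Realize a }

theorem mem_ftype {M : Type*} [L.Structure M] {a : Fin n → M} {ψ : L.Formula (Fin n)} :
    ψ ∈ ftype a ↔ ψ.Realize a := Iff.rfl

theorem ftype_eq_of_subset {M N : Type*} [L.Structure M] [L.Structure N]
    {a : Fin n → M} {b : Fin n → N} (h : ftype (L := L) a ⊆ ftype b) :
    ftype (L := L) a = ftype b := by
  ext ψ
  refine ⟨fun hψ => h hψ, fun hψ => ?_⟩
  by_contra hna
  have : ψ.not ∈ ftype a := by
    rw [mem_ftype, Formula.realize_not]; exact hna
  have := h this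
  rw [mem_ftype, Formula.realize_not] at this
  exact this hψ

/-- The isomorphism lemma: two tuples generating their models and having the same type
are carried to each other by an isomorphism. -/
theorem exists_equiv_of_ftype_subset {M N : Type*} [L.Structure M] [L.Structure N]
    {a : Fin n → M} {b : Fin n → N} (ha : Generates L a) (hb : Generates L b)
    (h : ftype (L := L) a ⊆ ftype b) : ∃ e : M ≃[L] N, ∀ i, e (a i) = b i := by
  have heq := ftype_eq_of_subset h
  have h2 : ftype b ⊆ ftype a := heq.symm.le
  have key : ∀ t s : L.Term (Fin n), t.realize a = s.realize a → t.realize b = s.realize b := by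
    intro t s hts
    have : Term.equal t s ∈ ftype a := by
      rw [mem_ftype, Formula.realize_equal]; exact hts
    have := h this
    rwa [mem_ftype, Formula.realize_equal] at this
  have key2 : ∀ t s : L.Term (Fin n), t.realize b = s.realize b → t.realize a = s.realize a := by
    intro t s hts
    have : Term.equal t s ∈ ftype b := by
      rw [mem_ftype, Formula.realize_equal]; exact hts
    have := h2 this
    rwa [mem_ftype, Formula.realize_equal] at this
  let F : M → N := fun y => (Classical.choose (ha y)).realize b
  let G : N → M := fun y => (Classical.choose (hb y)).realize a
  have hF : ∀ t : L.Term (Fin n), F (t.realize a) = t.realize b := fun t =>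
    key _ t (Classical.choose_spec (ha (t.realize a)))
  have hG : ∀ t : L.Term (Fin n), G (t.realize b) = t.realize a := fun t =>
    key2 _ t (Classical.choose_spec (hb (t.realize b)))
  have hFG : ∀ y, G (F y) = y := by
    intro y
    obtain ⟨t, ht⟩ := ha y
    rw [← ht, hF, hG]
  have hGF : ∀ y, F (G y) = y := by
    intro y
    obtain ⟨t, ht⟩ := hb y
    rw [← ht, hG, hF]
  refine ⟨⟨⟨F, G, hFG, hGF⟩, ?_, ?_⟩, ?_⟩
  · intro m f x
    have hx : ∀ i, (Classical.choose (ha (x i))).realize a = x i := fun i =>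
      Classical.choose_spec (ha (x i))
    have : Structure.funMap f x = (Term.func f fun i => Classical.choose (ha (x i))).realize a := by
      simp only [Term.realize, hx]
    show F (Structure.funMap f x) = Structure.funMap f (F ∘ x)
    rw [this, hF]
    have hcomp : F ∘ x = fun i => (Classical.choose (ha (x i))).realize b := by
      funext i
      exact (congrArg F (hx i)).symm.trans (hF (Classical.choose (ha (x i))))
    rw [hcomp]
    simp only [Term.realize]
  · intro m r x
    have hx : ∀ i, (Classical.choose (ha (x i))).realize a = x i := fun i =>
      Classical.choose_spec (ha (x i))
    set t : Fin m → L.Term (Fin n) := fun i => Classical.choose (ha (x i)) with htdef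
    have hFx : ∀ i : Fin m, F (x i) = (t i).realize b := by
      intro i; rw [← hx i, hF]
    have hx' : (fun i => (t i).realize a) = x := funext fun i => hx i
    have e1 : Structure.RelMap r x ↔ (r.formula t).Realize a := by
      rw [Formula.realize_rel, hx']
    have hcomp : F ∘ x = fun i => (t i).realize b := funext fun i => hFx i
    have e2 : Structure.RelMap (M := N) r (F ∘ x) ↔ (r.formula t).Realize b := by
      rw [Formula.realize_rel, hcomp]
    show Structure.RelMap r (F ∘ x) ↔ Structure.RelMap r x
    rw [e1, e2]
    exact ⟨fun hr => mem_ftype.1 (h2 (mem_ftype.2 hr)), fun hr => mem_ftype.1 (h (mem_ftype.2 hr))⟩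
  · intro i
    show F (a i) = b i
    have : a i = (Term.var i : L.Term (Fin n)).realize a := rfl
    rw [this, hF]
    rfl

variable (L) in
/-- `p` is a supported (isolated) type among types of generating tuples of models of `T`. -/
def SuppOn (T : L.Theory) (n : ℕ) (p : Set (L.Formula (Fin n))) : Prop :=
  ∃ φ : L.Formula (Fin n),
    (∃ (N : FirstOrder.Language.Theory.ModelType.{0, 0, 0} T) (b : Fin n → N),
      Generates L b ∧ φ.Realize b) ∧
    ∀ (N : FirstOrder.Language.Theory.ModelType.{0, 0, 0} T) (b : Fin n → N),
      Generates L b → φ.Realize b → p ⊆ ftype (L := L) b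

/-- A support of the type of a generating tuple is realized by that tuple itself. -/
theorem supp_mem {T : L.Theory} {N : FirstOrder.Language.Theory.ModelType.{0, 0, 0} T}
    {b : Fin n → N} (hb : Generates L b) {φ : L.Formula (Fin n)}
    (hsat : ∃ (N' : FirstOrder.Language.Theory.ModelType.{0, 0, 0} T) (b' : Fin n → N'),
      Generates L b' ∧ φ.Realize b')
    (hforce : ∀ (N' : FirstOrder.Language.Theory.ModelType.{0, 0, 0} T) (b' : Fin n → N'),
      Generates L b' → φ.Realize b' → ftype (L := L) b ⊆ ftype b') : φ.Realize b := by
  obtain ⟨N', b', hb', hφ⟩ := hsat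
  have hsub := hforce N' b' hb' hφ
  have heq := ftype_eq_of_subset hsub
  have : φ ∈ ftype b' := hφ
  rw [← heq] at this
  exact this

/-- Supportedness transfers between generating tuples of the same model. -/
theorem suppOn_transfer {T : L.Theory} {N : FirstOrder.Language.Theory.ModelType.{0, 0, 0} T}
    {b b' : Fin n → N} (hb : Generates L b) (hb' : Generates L b')
    (hsupp : SuppOn L T n (ftype b)) : SuppOn L T n (ftype b') := by
  classical
  obtain ⟨θ, hsat, hforce⟩ := hsupp
  have hθb : θ.Realize b := supp_mem hb hsat hforce
  -- terms expressing b' from b and b from b'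
  choose t ht using fun i => hb (b' i)
  choose s hs using fun i => hb' (b i)
  -- the new support
  let eqs : List (L.Formula (Fin n)) :=
    List.ofFn fun i : Fin n => Term.equal (Term.var i) ((t i).subst s)
  let θ' : L.Formula (Fin n) := (θ.subst s) ⊓ (eqs.foldr (· ⊓ ·) ⊤)
  have hrealize_eqs : ∀ (M : Type) [L.Structure M] (c : Fin n → M),
      (eqs.foldr (· ⊓ ·) ⊤).Realize c ↔ ∀ i, c i = (t i).realize fun j => (s j).realize c := by
    intro M _ c
    have : ∀ l : List (L.Formula (Fin n)),
        (l.foldr (· ⊓ ·) ⊤).Realize c ↔ ∀ ψ ∈ l, ψ.Realize c := by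
      intro l
      induction l with
      | nil => simp [Formula.realize_top]
      | cons hd tl ih => simp [Formula.realize_inf, ih]
    rw [this]
    simp only [eqs, List.mem_ofFn]
    constructor
    · intro hall i
      have := hall _ ⟨i, rfl⟩
      rw [Formula.realize_equal, Term.realize_subst] at this
      simpa using this
    · rintro hall ψ ⟨i, rfl⟩
      rw [Formula.realize_equal, Term.realize_subst]
      simpa using hall i
  have hrealize_subst : ∀ (M : Type) [L.Structure M] (c : Fin n → M) (ψ : L.Formula (Fin n)),
      Formula.Realize (L := L) (ψ.subst s) c ↔ ψ.Realize fun j => (s j).realize c := by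
    intro M _ c ψ
    exact BoundedFormula.realize_subst
  refine ⟨θ', ⟨N, b', hb', ?_⟩, ?_⟩
  · rw [Formula.realize_inf]
    constructor
    · rw [hrealize_subst]
      have : (fun j => (s j).realize b') = b := funext fun j => hs j
      rw [this]
      exact hθb
    · rw [hrealize_eqs]
      intro i
      have : (fun j => (s j).realize b') = b := funext fun j => hs j
      rw [this, ht i]
  · intro N₁ c hc hθ'c
    rw [Formula.realize_inf, hrealize_subst, hrealize_eqs] at hθ'c
    obtain ⟨hθd, hcd⟩ := hθ'c
    set d : Fin n → N₁ := fun j => (s j).realize c with hd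
    have hgen_d : Generates L d := by
      intro y
      obtain ⟨r, hr⟩ := hc y
      refine ⟨r.subst t, ?_⟩
      rw [Term.realize_subst]
      have : (fun i => (t i).realize d) = c := funext fun i => (hcd i).symm
      rw [this]
      exact hr
    have hsub : ftype b ⊆ ftype d := hforce N₁ d hgen_d hθd
    intro ψ hψ
    rw [mem_ftype] at hψ ⊢
    have : (ψ.subst t) ∈ ftype (L := L) b := by
      rw [mem_ftype]
      have : Formula.Realize (L := L) (ψ.subst t) b ↔ ψ.Realize fun i => (t i).realize b :=
        BoundedFormula.realize_subst
      rw [this]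
      have hbt : (fun i => (t i).realize b) = b' := funext fun i => ht i
      rw [hbt]
      exact hψ
    have hrd := hsub this
    rw [mem_ftype] at hrd
    have h2 : Formula.Realize (L := L) (ψ.subst t) d ↔ ψ.Realize fun i => (t i).realize d :=
      BoundedFormula.realize_subst
    rw [h2] at hrd
    have hdc : (fun i => (t i).realize d) = c := funext fun i => (hcd i).symm
    rwa [hdc] at hrd

variable (L) in
/-- The set of complete types of generating tuples of `n`-generated models of `T`. -/
def Sset (T : L.Theory) (n : ℕ) : Set (Set (L.Formula (Fin n))) :=
  { p | ∃ (N : FirstOrder.Language.Theory.ModelType.{0, 0, 0} T) (b : Fin n → N),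
      Generates L b ∧ p = ftype b }

theorem countable_formula (α : Type) [Countable α] [Countable L.Symbols] :
    Countable (L.Formula α) := by
  have hcard : Cardinal.mk (Σ k, L.BoundedFormula α k) ≤ Cardinal.aleph0 := by
    refine BoundedFormula.card_le.trans (max_le le_rfl ?_)
    have h1 : Cardinal.mk α ≤ Cardinal.aleph0 := Cardinal.mk_le_aleph0
    have h2 : L.card ≤ Cardinal.aleph0 := Cardinal.mk_le_aleph0
    calc Cardinal.lift.{0} (Cardinal.mk α) + Cardinal.lift.{0} L.card
        ≤ Cardinal.aleph0 + Cardinal.aleph0 := by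
          simpa [Cardinal.lift_id] using add_le_add h1 h2
      _ = Cardinal.aleph0 := Cardinal.aleph0_add_aleph0
  haveI : Countable (Σ k, L.BoundedFormula α k) := Cardinal.mk_le_aleph0_iff.1 hcard
  exact Function.Injective.countable
    (f := fun φ : L.Formula α => (⟨0, φ⟩ : Σ k, L.BoundedFormula α k))
    (fun φ ψ h => by simpa using h)

theorem countable_Sset {T : L.Theory} [Countable L.Symbols]
    (hα : alphaCard L T n ≤ Cardinal.aleph0) : (Sset L T n).Countable := by
  classical
  haveI hQ : Countable (Quotient (isoSetoid (L := L) (T := T) (n := n))) :=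
    Cardinal.mk_le_aleph0_iff.1 hα
  set Q := Quotient (isoSetoid (L := L) (T := T) (n := n)) with hQdef
  have hout : ∀ q : Q, ∃ a : Fin n → (q.out.1 : Type), Generates L a := fun q => q.out.2
  choose gen hgen using hout
  let F : ∀ _ : Q, (Fin n → L.Term (Fin n)) → Set (L.Formula (Fin n)) :=
    fun q t => ftype (fun i => (t i).realize (gen q))
  have hsub : Sset L T n ⊆ ⋃ q : Q, Set.range (F q) := by
    rintro p ⟨N, b, hb, rfl⟩
    have hN : ∃ a : Fin n → (N : Type), Generates L a := ⟨b, hb⟩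
    let X : NGenModel L T n := ⟨N, hN⟩
    set q : Q := ⟦X⟧ with hq
    obtain ⟨e⟩ : Nonempty ((q.out.1 : Type) ≃[L] (N : Type)) := Quotient.mk_out X
    choose t ht using fun i => hgen q (e.symm (b i))
    refine Set.mem_iUnion.2 ⟨q, ⟨t, ?_⟩⟩
    show ftype (fun i => (t i).realize (gen q)) = ftype b
    have hval : (fun i => (t i).realize (gen q)) = fun i => e.symm (b i) := funext fun i => ht i
    rw [hval]
    ext ψ
    rw [mem_ftype, mem_ftype]
    have := StrongHomClass.realize_formula e (φ := ψ) (v := fun i => e.symm (b i))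
    have hcomp : (⇑e ∘ fun i => e.symm (b i)) = b := funext fun i => e.apply_symm_apply (b i)
    rw [hcomp] at this
    exact this.symm
  exact Set.Countable.mono hsub (Set.countable_iUnion fun q => Set.countable_range (F q))

variable (L) in
/-- Satisfiable by a generating tuple of a model of `T`. -/
def SatK (T : L.Theory) (n : ℕ) (θ : L.Formula (Fin n)) : Prop :=
  ∃ (N : FirstOrder.Language.Theory.ModelType.{0, 0, 0} T) (b : Fin n → N),
    Generates L b ∧ θ.Realize b

variable (L) in
/-- Semantic implication between formulas. -/
def FImp (θ' θ : L.Formula (Fin n)) : Prop :=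
  ∀ (M : Type) [L.Structure M] (b : Fin n → M), θ'.Realize b → θ.Realize b

variable (L) in
/-- Tasks for the Henkin-style construction: witness tasks and diagonalization tasks. -/
def Tsk (T : L.Theory) (n : ℕ) : Type :=
  L.Formula (Fin n ⊕ Fin 1) ⊕ ↥(Sset L T n)

theorem realize_subst_elim {M : Type*} [L.Structure M] (χ : L.Formula (Fin n ⊕ Fin 1))
    (t : L.Term (Fin n)) (c : Fin n → M) :
    Formula.Realize (L := L) (χ.subst (Sum.elim Term.var fun _ => t)) c ↔
      χ.Realize (Sum.elim c fun _ => t.realize c) := by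
  have h0 : Formula.Realize (L := L) (χ.subst (Sum.elim Term.var fun _ => t)) c ↔
      χ.Realize fun v => ((Sum.elim Term.var (fun _ => t) : _ → L.Term (Fin n)) v).realize c :=
    BoundedFormula.realize_subst
  rw [h0]
  have : (fun v => ((Sum.elim Term.var (fun _ => t) : Fin n ⊕ Fin 1 → L.Term (Fin n)) v).realize c)
      = (Sum.elim c fun _ => t.realize c : Fin n ⊕ Fin 1 → M) := by
    funext v
    cases v with
    | inl i => simp
    | inr j => simp
  rw [this]

theorem realize_iExs_id {M : Type*} [L.Structure M] (χ : L.Formula (Fin n ⊕ Fin 1))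
    (c : Fin n → M) :
    Formula.Realize (Formula.iExs (Fin 1) χ) c ↔ ∃ z : M, χ.Realize (Sum.elim c fun _ => z) := by
  rw [Formula.realize_iExs]
  constructor
  · rintro ⟨i, hi⟩
    refine ⟨i 0, ?_⟩
    have : Sum.elim c i = (Sum.elim c fun _ => i 0 : Fin n ⊕ Fin 1 → M) := by
      funext v
      cases v with
      | inl k => simp
      | inr j => simp [Fin.eq_zero j]
    rwa [this] at hi
  · rintro ⟨z, hz⟩
    refine ⟨fun _ => z, ?_⟩
    have : (fun a => Sum.elim c (fun _ => z) (id a)) =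
        (Sum.elim c fun _ => z : Fin n ⊕ Fin 1 → M) := by
      funext v; cases v <;> simp
    exact hz

variable (L) in
/-- What it means to have completed a given task with current condition `θ'`. -/
def TaskProp (T : L.Theory) (n : ℕ) (θ' : L.Formula (Fin n)) : Tsk L T n → Prop
  | .inl χ =>
      (∀ (M : Type) [L.Structure M] (b : Fin n → M), θ'.Realize b →
          ¬ Formula.Realize (Formula.iExs (Fin 1) χ) b) ∨
      ∃ t : L.Term (Fin n), ∀ (M : Type) [L.Structure M] (b : Fin n → M), θ'.Realize b →
          χ.Realize (Sum.elim b fun _ => t.realize b)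
  | .inr p =>
      ∃ ψ : L.Formula (Fin n), ψ ∉ (p : Set (L.Formula (Fin n))) ∧
        ∀ (M : Type) [L.Structure M] (b : Fin n → M), θ'.Realize b → ψ.Realize b

theorem step_ex {T : L.Theory}
    (H : ∀ (N : FirstOrder.Language.Theory.ModelType.{0, 0, 0} T) (b : Fin n → N),
      Generates L b → ¬ SuppOn L T n (ftype b))
    (θ : L.Formula (Fin n)) (hθ : SatK L T n θ) (tk : Tsk L T n) :
    ∃ θ' : L.Formula (Fin n), SatK L T n θ' ∧ FImp L θ' θ ∧ TaskProp L T n θ' tk := by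
  classical
  obtain ⟨N, b, hb, hθb⟩ := hθ
  cases tk with
  | inl χ =>
    by_cases hex : ∃ z : (N : Type), χ.Realize (Sum.elim b fun _ => z)
    · obtain ⟨z, hz⟩ := hex
      obtain ⟨t, ht⟩ := hb z
      refine ⟨θ ⊓ χ.subst (Sum.elim Term.var fun _ => t), ⟨N, b, hb, ?_⟩,
        fun M _ c hc => (Formula.realize_inf.1 hc).1, Or.inr ⟨t, fun M _ c hc => ?_⟩⟩
      · rw [Formula.realize_inf]
        refine ⟨hθb, ?_⟩
        rw [realize_subst_elim, ht]
        exact hz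
      · have := (Formula.realize_inf.1 hc).2
        rwa [realize_subst_elim] at this
    · refine ⟨θ ⊓ (Formula.iExs (Fin 1) χ).not, ⟨N, b, hb, ?_⟩,
        fun M _ c hc => (Formula.realize_inf.1 hc).1, Or.inl fun M _ c hc => ?_⟩
      · rw [Formula.realize_inf, Formula.realize_not, realize_iExs_id]
        exact ⟨hθb, hex⟩
      · have := (Formula.realize_inf.1 hc).2
        rwa [Formula.realize_not] at this
  | inr p =>
    obtain ⟨Np, ap, hgen_ap, hp⟩ := p.2
    have hnsupp := H Np ap hgen_ap
    have hforce_fail : ¬ ∀ (N' : FirstOrder.Language.Theory.ModelType.{0, 0, 0} T)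
        (b' : Fin n → N'), Generates L b' → θ.Realize b' → ftype (L := L) ap ⊆ ftype b' := by
      intro hforce
      exact hnsupp ⟨θ, ⟨N, b, hb, hθb⟩, hforce⟩
    push_neg at hforce_fail
    obtain ⟨N', b', hb', hθb', hnsub⟩ := hforce_fail
    rw [Set.not_subset] at hnsub
    obtain ⟨ψ₀, hψ₀a, hψ₀b⟩ := hnsub
    refine ⟨θ ⊓ ψ₀.not, ⟨N', b', hb', ?_⟩,
      fun M _ c hc => (Formula.realize_inf.1 hc).1, ⟨ψ₀.not, ?_, fun M _ c hc => ?_⟩⟩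
    · rw [Formula.realize_inf, Formula.realize_not]
      exact ⟨hθb', hψ₀b⟩
    · rw [hp]
      intro hmem
      rw [mem_ftype, Formula.realize_not] at hmem
      exact hmem hψ₀a
    · exact (Formula.realize_inf.1 hc).2

variable (L) in
/-- The Henkin-style sequence of conditions. -/
noncomputable def seqF {T : L.Theory}
    (H : ∀ (N : FirstOrder.Language.Theory.ModelType.{0, 0, 0} T) (b : Fin n → N),
      Generates L b → ¬ SuppOn L T n (ftype b))
    (h0 : SatK L T n ⊤) (τ : ℕ → Tsk L T n) :
    ℕ → {θ : L.Formula (Fin n) // SatK L T n θ} := fun k =>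
  Nat.rec (motive := fun _ => {θ : L.Formula (Fin n) // SatK L T n θ}) ⟨⊤, h0⟩
    (fun m ih => ⟨Classical.choose (step_ex H ih.1 ih.2 (τ m)),
      (Classical.choose_spec (step_ex H ih.1 ih.2 (τ m))).1⟩) k

theorem seqF_spec {T : L.Theory}
    (H : ∀ (N : FirstOrder.Language.Theory.ModelType.{0, 0, 0} T) (b : Fin n → N),
      Generates L b → ¬ SuppOn L T n (ftype b))
    (h0 : SatK L T n ⊤) (τ : ℕ → Tsk L T n) (k : ℕ) :
    FImp L (seqF L H h0 τ (k + 1)).1 (seqF L H h0 τ k).1 ∧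
      TaskProp L T n (seqF L H h0 τ (k + 1)).1 (τ k) :=
  (Classical.choose_spec (step_ex H (seqF L H h0 τ k).1 (seqF L H h0 τ k).2 (τ k))).2

/-- The diagonalization: if every generating tuple has unsupported type, we reach a
contradiction with countability of the set of types. -/
theorem main_false {T : L.Theory} [Countable L.Symbols]
    (hcons : NConsistent L T n) (hα : alphaCard L T n ≤ Cardinal.aleph0)
    (H : ∀ (N : FirstOrder.Language.Theory.ModelType.{0, 0, 0} T) (b : Fin n → N),
      Generates L b → ¬ SuppOn L T n (ftype b)) : False := by
  classical
  haveI : Countable (L.Formula (Fin n ⊕ Fin 1)) := countable_formula _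
  have hSc : (Sset L T n).Countable := countable_Sset hα
  haveI : Countable ↥(Sset L T n) := hSc.to_subtype
  haveI : Countable (Tsk L T n) := by
    unfold Tsk; infer_instance
  haveI : Nonempty (Tsk L T n) := ⟨Sum.inl ⊥⟩
  obtain ⟨τ, hτ⟩ := exists_surjective_nat (Tsk L T n)
  obtain ⟨N₀, a₀, ha₀⟩ := hcons
  have h0 : SatK L T n ⊤ := ⟨N₀, a₀, ha₀, by rw [Formula.realize_top]; trivial⟩
  set σ := seqF L H h0 τ with hσ
  have hsat : ∀ k, SatK L T n (σ k).1 := fun k => (σ k).2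
  choose Nk bk hgen hsatk using hsat
  -- the chain property
  have chain : ∀ j k, j ≤ k → FImp L (σ k).1 (σ j).1 := by
    intro j k hjk
    induction k, hjk using Nat.le_induction with
    | base => intro M _ b hb; exact hb
    | succ k hk ih =>
      intro M _ b hb
      exact ih M b ((seqF_spec (L := L) H h0 τ k).1 M b hb)
  -- the ultraproduct
  let u : Ultrafilter ℕ := Ultrafilter.of Filter.cofinite
  let Mf : ℕ → Type := fun k => (Nk k : Type)
  letI hMfS : ∀ k, L.Structure (Mf k) := fun k => (Nk k).struc
  letI hMfN : ∀ k, Nonempty (Mf k) := fun k => inferInstanceAs (Nonempty (Nk k))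
  haveI hPT : (u : Filter ℕ).Product Mf ⊨ T := by
    refine ⟨fun φ hφ => ?_⟩
    rw [Ultraproduct.sentence_realize]
    exact Filter.Eventually.of_forall fun k => (Nk k).is_model.realize_of_mem φ hφ
  let xfun : Fin n → ∀ k, Mf k := fun i k => bk k i
  let bstar : Fin n → (u : Filter ℕ).Product Mf := fun i => (xfun i : (u : Filter ℕ).Product Mf)
  -- every condition is realized at bstar
  have humem : ∀ m : ℕ, {k : ℕ | m ≤ k} ∈ (u : Filter ℕ) := by
    intro m
    refine Filter.le_def.1 (Ultrafilter.of_le Filter.cofinite) _ ?_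
    rw [Filter.mem_cofinite]
    have hsub : {k : ℕ | m ≤ k}ᶜ ⊆ Set.Iio m := by
      intro k hk
      simp only [Set.mem_compl_iff, Set.mem_setOf_eq, not_le] at hk
      exact hk
    exact (Set.finite_Iio m).subset hsub
  have hreal : ∀ m : ℕ, Formula.Realize ((σ m).1) bstar := by
    intro m
    have := (Ultraproduct.realize_formula_cast (u := u) ((σ m).1) xfun).2 ?_
    · exact this
    · rw [Filter.eventually_iff]
      refine Filter.mem_of_superset (humem m) ?_
      intro k hk
      simp only [Set.mem_setOf_eq] at hk ⊢
      have : ((σ k).1).Realize fun i => xfun i k := hsatk k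
      exact chain m k hk (Mf k) _ this
  -- the generated substructure
  set Sc : L.Substructure ((u : Filter ℕ).Product Mf) :=
    Substructure.closure L (Set.range bstar) with hScdef
  have term_mem : ∀ t : L.Term (Fin n), t.realize bstar ∈ Sc := by
    intro t
    rw [hScdef, Substructure.mem_closure_iff_exists_term]
    refine ⟨t.relabel fun i => ⟨bstar i, Set.mem_range_self i⟩, ?_⟩
    rw [Term.realize_relabel]
    rfl
  have mem_term : ∀ y ∈ Sc, ∃ t : L.Term (Fin n), t.realize bstar = y := by
    intro y hy
    rw [hScdef, Substructure.mem_closure_iff_exists_term] at hy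
    obtain ⟨t', ht'⟩ := hy
    refine ⟨t'.relabel fun z => Classical.choose z.2, ?_⟩
    rw [Term.realize_relabel, ← ht']
    congr 1
    funext z
    exact Classical.choose_spec z.2
  -- Tarski-Vaught via the witness tasks
  have htv : ∀ (k : ℕ) (φ : L.BoundedFormula Empty (k + 1)) (x : Fin k → Sc)
      (aa : (u : Filter ℕ).Product Mf),
      φ.Realize default (Fin.snoc ((↑) ∘ x) aa) →
        ∃ bb : Sc, φ.Realize default (Fin.snoc ((↑) ∘ x) (bb : (u : Filter ℕ).Product Mf)) := by
    intro k φ x aa hre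
    choose st hst using fun j => mem_term ((x j : (u : Filter ℕ).Product Mf)) (x j).2
    let g : Empty ⊕ Fin (k + 1) → L.Term (Fin n ⊕ Fin 1) :=
      Sum.elim (fun e => e.elim)
        (Fin.lastCases (Term.var (Sum.inr 0)) fun j => (st j).relabel Sum.inl)
    let χ : L.Formula (Fin n ⊕ Fin 1) := φ.toFormula.subst g
    have key : ∀ (P : Type) [L.Structure P] (v : Fin n → P) (z : P),
        χ.Realize (Sum.elim v fun _ => z) ↔
          φ.Realize (default : Empty → P) (Fin.snoc (fun j => (st j).realize v) z) := by
      intro P _ v z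
      have h1 : Formula.Realize (L := L) χ (Sum.elim v fun _ => z) ↔
          φ.toFormula.Realize fun a => (g a).realize (Sum.elim v fun _ => z) :=
        BoundedFormula.realize_subst
      rw [h1, BoundedFormula.realize_toFormula]
      have e1 : ((fun a => (g a).realize (Sum.elim v fun _ => z)) ∘ Sum.inl) =
          (default : Empty → P) := by
        funext e; exact e.elim
      have e2 : ((fun a => (g a).realize (Sum.elim v fun _ => z)) ∘ Sum.inr) =
          Fin.snoc (fun j => (st j).realize v) z := by
        funext j
        refine Fin.lastCases ?_ (fun i => ?_) j
        · show (g (Sum.inr (Fin.last k))).realize _ = _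
          simp only [g, Sum.elim_inr, Fin.lastCases_last, Fin.snoc_last]
          simp
        · show (g (Sum.inr i.castSucc)).realize _ = _
          simp only [g, Sum.elim_inr, Fin.lastCases_castSucc, Fin.snoc_castSucc]
          rw [Term.realize_relabel]
          congr 1
      rw [e1, e2]
    have hsn : (fun j => (st j).realize bstar) = (((↑) : Sc → _) ∘ x) := funext fun j => hst j
    have hχex : Formula.Realize (Formula.iExs (Fin 1) χ) bstar := by
      rw [realize_iExs_id]
      refine ⟨aa, ?_⟩
      rw [key, hsn]
      exact hre
    obtain ⟨k₁, hk₁⟩ := hτ (Sum.inl χ)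
    have htp := (seqF_spec (L := L) H h0 τ k₁).2
    rw [hk₁] at htp
    cases htp with
    | inl hneg => exact absurd hχex (hneg _ bstar (hreal (k₁ + 1)))
    | inr hpos =>
      obtain ⟨t, himp⟩ := hpos
      have hχt := himp _ bstar (hreal (k₁ + 1))
      rw [key, hsn] at hχt
      exact ⟨⟨t.realize bstar, term_mem t⟩, hχt⟩
  -- the elementary substructure generated by bstar
  let ES : L.ElementarySubstructure ((u : Filter ℕ).Product Mf) :=
    Sc.toElementarySubstructure htv
  haveI hESne : Nonempty ES := by
    obtain ⟨t₀, _⟩ := ha₀ (Classical.arbitrary N₀)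
    exact ⟨⟨t₀.realize bstar, term_mem t₀⟩⟩
  haveI hESmod : ES ⊨ T := inferInstance
  let Mfin : FirstOrder.Language.Theory.ModelType.{0, 0, 0} T :=
    FirstOrder.Language.Theory.ModelType.of T ES
  let c : Fin n → (Mfin : Type) := fun i => ⟨bstar i, term_mem (Term.var i)⟩
  have hgen_c : Generates L c := by
    intro y
    obtain ⟨t, ht⟩ := mem_term y.1 y.2
    refine ⟨t, ?_⟩
    have h1 : t.realize (((↑) : Sc → _) ∘ (c : Fin n → Sc)) =
        ((t.realize (c : Fin n → Sc) : Sc) : (u : Filter ℕ).Product Mf) :=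
      FirstOrder.Language.realize_term_substructure _ t
    have h2 : (((↑) : Sc → _) ∘ (c : Fin n → Sc)) = bstar := funext fun i => rfl
    rw [h2] at h1
    exact Subtype.ext ((h1.symm.trans ht))
  have hrealc : ∀ m : ℕ, Formula.Realize ((σ m).1) c := by
    intro m
    have h3 := (ES.subtype).map_formula ((σ m).1) c
    have h4 : (⇑ES.subtype ∘ c) = bstar := by
      rw [ElementarySubstructure.coe_subtype]
      exact funext fun i => rfl
    rw [h4] at h3
    exact h3.1 (hreal m)
  -- the diagonal contradiction
  have hΓ : ftype c ∈ Sset L T n := ⟨Mfin, c, hgen_c, rfl⟩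
  obtain ⟨k₀, hk₀⟩ := hτ (Sum.inr ⟨ftype c, hΓ⟩)
  have htp := (seqF_spec (L := L) H h0 τ k₀).2
  rw [hk₀] at htp
  obtain ⟨ψ, hψnot, hψimp⟩ := htp
  exact hψnot (hψimp _ c (hrealc (k₀ + 1)))

end Stmt8

/-- If `T` is `n`-consistent with at most `ℵ₀` classes of `n`-generated
models, there is an `n`-generated model `M` of `T` such that for every generating tuple
`ā` there is a formula `φ` with: for every model `N` of `T` generated by `b̄`,
`(M, ā) ≅ (N, b̄)` iff `N ⊨ φ(b̄)`. -/
theorem stmt_8 (L : FirstOrder.Language.{0, 0}) [Countable L.Symbols] (T : L.Theory)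
    (n : ℕ) (hcons : Paper.NConsistent L T n)
    (hα : Paper.alphaCard L T n ≤ Cardinal.aleph0) :
    ∃ M : FirstOrder.Language.Theory.ModelType.{0, 0, 0} T,
      (∃ a : Fin n → M, Paper.Generates L a) ∧
      ∀ a : Fin n → M, Paper.Generates L a →
        ∃ φ : L.Formula (Fin n),
          ∀ (N : FirstOrder.Language.Theory.ModelType.{0, 0, 0} T) (b : Fin n → N),
            Paper.Generates L b →
            ((∃ e : (M : Type) ≃[L] (N : Type), ∀ i, e (a i) = b i) ↔ φ.Realize b) := by
  classical
  by_cases hgood : ∃ M : FirstOrder.Language.Theory.ModelType.{0, 0, 0} T,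
      (∃ a : Fin n → M, Paper.Generates L a) ∧
      ∀ a : Fin n → M, Paper.Generates L a → Stmt8.SuppOn L T n (Stmt8.ftype a)
  · obtain ⟨M, hex, hsupp⟩ := hgood
    refine ⟨M, hex, fun a ha => ?_⟩
    obtain ⟨φ, hsat, hforce⟩ := hsupp a ha
    have hφa : φ.Realize a := Stmt8.supp_mem ha hsat hforce
    refine ⟨φ, fun N b hb => ⟨?_, ?_⟩⟩
    · rintro ⟨e, he⟩
      have hr := (StrongHomClass.realize_formula e (φ := φ) (v := a)).2 hφa
      have hcomp : (⇑e ∘ a) = b := funext he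
      rwa [hcomp] at hr
    · intro hφb
      have hsub : Stmt8.ftype (L := L) a ⊆ Stmt8.ftype b := hforce N b hb hφb
      exact Stmt8.exists_equiv_of_ftype_subset ha hb hsub
  · exfalso
    push_neg at hgood
    have H : ∀ (N : FirstOrder.Language.Theory.ModelType.{0, 0, 0} T) (b : Fin n → N),
        Paper.Generates L b → ¬ Stmt8.SuppOn L T n (Stmt8.ftype b) := by
      intro N b hb hsupp
      obtain ⟨a, ha, hnsupp⟩ := hgood N ⟨b, hb⟩
      exact hnsupp (Stmt8.suppOn_transfer hb ha hsupp)
    exact Stmt8.main_false hcons hα H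
end

section
/- Let T be a ∀∃-theory in a countable language, P and Q countable sets of universal types. If K(T|P) is nonempty and each q ∈ Q is existentially unsupported over K(T|P), then there exists a countable model in K(T|P) omitting every q ∈ Q. -/
open FirstOrder FirstOrder.Language Cardinal

namespace OT

open FirstOrder FirstOrder.Language

variable {L : FirstOrder.Language.{0, 0}} {α β : Type} {n : ℕ}

/-! ### Quantifier-free syntax utilities -/

lemma isQF_equal (t₁ t₂ : L.Term α) : (Term.equal t₁ t₂).IsQF :=
  (BoundedFormula.IsAtomic.equal _ _).isQF

lemma isQF_relFormula (R : L.Relations n) (ts : Fin n → L.Term α) :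
    (R.formula ts).IsQF :=
  (BoundedFormula.IsAtomic.rel _ _).isQF

lemma isQF_formulaRelabel {φ : L.Formula α} (h : φ.IsQF) (g : α → β) :
    (φ.relabel g).IsQF :=
  h.relabel _

lemma isQF_toFormula : ∀ {n : ℕ} {φ : L.BoundedFormula α n}, φ.IsQF → φ.toFormula.IsQF := by
  intro n φ h
  induction h with
  | falsum => exact BoundedFormula.isQF_bot
  | of_isAtomic h =>
    cases h with
    | equal t₁ t₂ => exact (BoundedFormula.IsAtomic.equal _ _).isQF
    | rel R ts => exact (BoundedFormula.IsAtomic.rel _ _).isQF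
  | imp h₁ h₂ ih₁ ih₂ => exact ih₁.imp ih₂

/-- Conjunction of a list of bounded formulas. -/
def conjList (l : List (L.BoundedFormula α n)) : L.BoundedFormula α n :=
  l.foldr (· ⊓ ·) ⊤

lemma isQF_conjList {l : List (L.BoundedFormula α n)} (h : ∀ φ ∈ l, φ.IsQF) :
    (conjList l).IsQF := by
  induction l with
  | nil => exact BoundedFormula.IsQF.top
  | cons a t ih =>
    exact (h a List.mem_cons_self).inf (ih fun φ hφ => h φ (List.mem_cons_of_mem _ hφ))

lemma realize_conjList {M : Type} [L.Structure M] {l : List (L.BoundedFormula α n)}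
    {v : α → M} {xs : Fin n → M} :
    (conjList l).Realize v xs ↔ ∀ φ ∈ l, φ.Realize v xs := by
  induction l with
  | nil => simp [conjList]
  | cons a t ih =>
    simp only [conjList, List.foldr_cons, BoundedFormula.realize_inf, List.mem_cons]
    constructor
    · rintro ⟨h1, h2⟩ φ (rfl | hφ)
      · exact h1
      · exact ih.1 h2 φ hφ
    · intro h
      exact ⟨h a (Or.inl rfl), ih.2 fun φ hφ => h φ (Or.inr hφ)⟩

lemma castAdd_zero_eq (i : Fin n) : Fin.castAdd 0 i = i := by
  ext; rfl

/-- Realization of `Paper.exsTo`. -/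
lemma realize_exsTo {M : Type} [L.Structure M] :
    ∀ {m k : ℕ} (φ : L.BoundedFormula α (m + k)) (v : α → M) (xs : Fin m → M),
      (Paper.exsTo φ).Realize v xs ↔
        ∃ zs : Fin (m + k) → M, (∀ i : Fin m, zs (Fin.castAdd k i) = xs i) ∧ φ.Realize v zs := by
  intro m k
  induction k with
  | zero =>
    intro φ v xs
    constructor
    · intro h
      exact ⟨xs, fun i => by rw [castAdd_zero_eq], h⟩
    · rintro ⟨zs, hzs, h⟩
      have : zs = xs := funext fun i => by rw [← hzs i, castAdd_zero_eq]
      exact this ▸ h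
  | succ k ih =>
    intro φ v xs
    have : Paper.exsTo φ = Paper.exsTo φ.ex := rfl
    rw [this, ih φ.ex v xs]
    constructor
    · rintro ⟨zs, hzs, hex⟩
      rw [BoundedFormula.realize_ex] at hex
      obtain ⟨a, ha⟩ := hex
      refine ⟨Fin.snoc zs a, fun i => ?_, ha⟩
      have h1 : Fin.castAdd (k + 1) i = Fin.castSucc (Fin.castAdd k i) := by ext; rfl
      rw [h1, Fin.snoc_castSucc]
      exact hzs i
    · rintro ⟨zs, hzs, h⟩
      refine ⟨Fin.init zs, fun i => ?_, ?_⟩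
      · have h1 : Fin.castAdd (k + 1) i = Fin.castSucc (Fin.castAdd k i) := by ext; rfl
        rw [← hzs i, h1]
        simp [Fin.init]
      · rw [BoundedFormula.realize_ex]
        refine ⟨zs (Fin.last _), ?_⟩
        have hs := Fin.snoc_init_self zs
        rwa [hs]

/-! ### Semantic support of formulas over `ℕ` -/

/-- `φ` only depends on the variables below `m`. -/
def Supp (m : ℕ) (φ : L.Formula ℕ) : Prop :=
  ∀ (M : Type) (_ : L.Structure M) (v v' : ℕ → M),
    (∀ i, i < m → v i = v' i) → (φ.Realize v ↔ φ.Realize v')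

lemma Supp.mono {m m' : ℕ} {φ : L.Formula ℕ} (h : Supp m φ) (hm : m ≤ m') : Supp m' φ :=
  fun M S v v' hv => h M S v v' fun i hi => hv i (lt_of_lt_of_le hi hm)

lemma Supp.inf {m : ℕ} {φ ψ : L.Formula ℕ} (hφ : Supp m φ) (hψ : Supp m ψ) :
    Supp m (φ ⊓ ψ) := by
  intro M S v v' hv
  simp only [Formula.realize_inf]
  rw [hφ M S v v' hv, hψ M S v v' hv]

lemma Supp.not {m : ℕ} {φ : L.Formula ℕ} (hφ : Supp m φ) : Supp m φ.not := by
  intro M S v v' hv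
  simp only [Formula.realize_not]
  rw [hφ M S v v' hv]

lemma Supp.relabel {m : ℕ} (ψ : L.Formula β) (g : β → ℕ) (hg : ∀ b, g b < m) :
    Supp m (ψ.relabel g) := by
  intro M S v v' hv
  simp only [Formula.realize_relabel]
  have : v ∘ g = v' ∘ g := funext fun b => hv (g b) (hg b)
  rw [this]

lemma realize_congr_freeVar {M : Type} [L.Structure M] (φ : L.Formula ℕ) {v v' : ℕ → M}
    (h : ∀ i ∈ φ.freeVarFinset, v i = v' i) : φ.Realize v ↔ φ.Realize v' := by
  have hsub : ↑φ.freeVarFinset ⊆ ((φ.freeVarFinset : Set ℕ)) := subset_refl _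
  have h1 := BoundedFormula.realize_restrictFreeVar' (M := M) (φ := φ)
    (s := (φ.freeVarFinset : Set ℕ)) hsub (v := v) (xs := default)
  have h2 := BoundedFormula.realize_restrictFreeVar' (M := M) (φ := φ)
    (s := (φ.freeVarFinset : Set ℕ)) hsub (v := v') (xs := default)
  have he : (v ∘ (Subtype.val : ((φ.freeVarFinset : Set ℕ)) → ℕ)) = v' ∘ Subtype.val := by
    funext i
    exact h i.1 (by exact_mod_cast i.2)
  exact h1.symm.trans (he ▸ h2)

/-- A numeric bound beyond which `φ` has no free variables. -/
def fBound (φ : L.Formula ℕ) : ℕ := φ.freeVarFinset.sup id + 1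

lemma lt_fBound {φ : L.Formula ℕ} {i : ℕ} (h : i ∈ φ.freeVarFinset) : i < fBound φ :=
  Nat.lt_succ_of_le (Finset.le_sup (f := id) h)

lemma supp_fBound (φ : L.Formula ℕ) : Supp (fBound φ) φ := by
  intro M S v v' hv
  exact realize_congr_freeVar φ fun i hi => hv i (lt_fBound hi)

end OT
namespace OT

variable {L : FirstOrder.Language.{0, 0}}

lemma term_realize_congr {M : Type} [L.Structure M] (t : L.Term ℕ) {v v' : ℕ → M}
    (h : ∀ i ∈ t.varFinset, v i = v' i) : t.realize v = t.realize v' := by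
  induction t with
  | var i => exact h i (by simp [Term.varFinset])
  | func f ts ih =>
    simp only [Term.realize]
    congr 1
    funext r
    exact ih r fun i hi => h i (by
      simp only [Term.varFinset, Finset.mem_biUnion, Finset.mem_univ, true_and]
      exact ⟨r, hi⟩)

lemma realize_bf0 {M : Type} [L.Structure M] {α : Type} (φ : L.BoundedFormula α 0)
    {v : α → M} {xs : Fin 0 → M} : φ.Realize v xs ↔ Formula.Realize φ v := by
  rw [Subsingleton.elim xs (default : Fin 0 → M)]
  rfl

/-! ### Conditions -/

variable {T : L.Theory} {P : Set (Paper.MType L)}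

/-- A condition: a quantifier-free formula over the variables `ℕ`, supported below `m`,
satisfiable in a model of `T` inside `K(T|P)`. -/
structure Cond (T : L.Theory) (P : Set (Paper.MType L)) : Type 1 where
  m : ℕ
  θ : L.Formula ℕ
  qf : θ.IsQF
  supp : Supp m θ
  sat : ∃ M : T.ModelType, M ∈ Paper.KTP T P ∧ ∃ v : ℕ → M, θ.Realize v

/-- `C` semantically forces `δ`. -/
def SemImp (C : Cond T P) (δ : L.Formula ℕ) : Prop :=
  ∀ (M : Type) (_ : L.Structure M) (v : ℕ → M), C.θ.Realize v → δ.Realize v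

def Extends (C' C : Cond T P) : Prop :=
  C.m ≤ C'.m ∧ ∀ (M : Type) (_ : L.Structure M) (v : ℕ → M), C'.θ.Realize v → C.θ.Realize v

lemma Extends.refl (C : Cond T P) : Extends C C := ⟨le_rfl, fun _ _ _ h => h⟩

lemma Extends.trans {C₁ C₂ C₃ : Cond T P} (h1 : Extends C₁ C₂) (h2 : Extends C₂ C₃) :
    Extends C₁ C₃ :=
  ⟨h2.1.trans h1.1, fun M S v hv => h2.2 M S v (h1.2 M S v hv)⟩

lemma SemImp.ofExtends {C C' : Cond T P} {δ : L.Formula ℕ} (h : SemImp C δ)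
    (he : Extends C' C) : SemImp C' δ :=
  fun M S v hv => h M S v (he.2 M S v hv)

/-- Record a new quantifier-free fact `δ` into a condition. -/
lemma record_exists (C : Cond T P) (δ : L.Formula ℕ) (m' : ℕ) (hm : C.m ≤ m')
    (hqf : δ.IsQF) (hsupp : Supp m' δ)
    (hsat : ∃ M : T.ModelType, M ∈ Paper.KTP T P ∧ ∃ v : ℕ → M, C.θ.Realize v ∧ δ.Realize v) :
    ∃ C' : Cond T P, Extends C' C ∧ SemImp C' δ := by
  obtain ⟨M, hM, v, hv1, hv2⟩ := hsat
  refine ⟨⟨m', C.θ ⊓ δ, C.qf.inf hqf, (C.supp.mono hm).inf hsupp, ⟨M, hM, v, ?_⟩⟩, ?_, ?_⟩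
  · exact Formula.realize_inf.2 ⟨hv1, hv2⟩
  · exact ⟨hm, fun M S v hv => (Formula.realize_inf.1 hv).1⟩
  · exact fun M S v hv => (Formula.realize_inf.1 hv).2

/-- Step handling a decision requirement. -/
lemma step_dec (C : Cond T P) (φ : L.Formula ℕ) (hφ : φ.IsQF) :
    ∃ C', Extends C' C ∧ (SemImp C' φ ∨ SemImp C' φ.not) := by
  obtain ⟨M, hM, v, hv⟩ := C.sat
  by_cases h : φ.Realize v
  · obtain ⟨C', h1, h2⟩ := record_exists C φ (max C.m (fBound φ)) (le_max_left _ _) hφ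
      ((supp_fBound φ).mono (le_max_right _ _)) ⟨M, hM, v, hv, h⟩
    exact ⟨C', h1, Or.inl h2⟩
  · obtain ⟨C', h1, h2⟩ := record_exists C φ.not (max C.m (fBound φ)) (le_max_left _ _) hφ.not
      ((supp_fBound φ).not.mono (le_max_right _ _))
      ⟨M, hM, v, hv, Formula.realize_not.2 h⟩
    exact ⟨C', h1, Or.inr h2⟩

/-- Step handling a term-witness requirement. -/
lemma step_term (C : Cond T P) (t : L.Term ℕ) :
    ∃ C', Extends C' C ∧ ∃ ν : ℕ, SemImp C' (Term.equal t (Term.var ν)) := by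
  obtain ⟨M, hM, v, hv⟩ := C.sat
  set ν := max C.m (t.varFinset.sup id + 1) with hν
  have htv : ∀ i ∈ t.varFinset, i < ν :=
    fun i hi => lt_of_lt_of_le (Nat.lt_succ_of_le (Finset.le_sup (f := id) hi)) (le_max_right _ _)
  have hsupp : Supp (ν + 1) (Term.equal t (Term.var ν)) := by
    intro M S v v' hvv
    simp only [Formula.realize_equal, Term.realize_var]
    rw [term_realize_congr t fun i hi => hvv i ((htv i hi).trans (Nat.lt_succ_self ν)),
      hvv ν (Nat.lt_succ_self ν)]
  have hsat : ∃ M : T.ModelType, M ∈ Paper.KTP T P ∧ ∃ v : ℕ → M,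
      C.θ.Realize v ∧ (Term.equal t (Term.var ν)).Realize v := by
    refine ⟨M, hM, fun i => if i = ν then t.realize v else v i, ?_, ?_⟩
    · refine (C.supp M _ v _ ?_).1 hv
      intro i hi
      have : i ≠ ν := by
        intro hcon
        rw [hcon] at hi
        exact absurd (le_max_left C.m _) (not_le.2 hi)
      simp [this]
    · simp only [Formula.realize_equal, Term.realize_var, if_pos rfl]
      refine term_realize_congr t fun i hi => ?_
      have : i ≠ ν := Nat.ne_of_lt (htv i hi)
      simp [this]
  obtain ⟨C', h1, h2⟩ := record_exists C (Term.equal t (Term.var ν)) (ν + 1)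
    (le_trans (le_max_left _ _) (Nat.le_succ ν)) (isQF_equal _ _) hsupp hsat
  exact ⟨C', h1, ν, h2⟩

end OT
namespace OT

variable {L : FirstOrder.Language.{0, 0}} {T : L.Theory} {P Q : Set (Paper.MType L)}

/-- Extend an assignment `v` by the values `ys` placed at variables `m', m'+1, …`. -/
def extAsg {M : Type} (v : ℕ → M) (m' k : ℕ) (ys : Fin k → M) : ℕ → M :=
  fun n => if n < m' then v n else if h2 : n - m' < k then ys ⟨n - m', h2⟩ else v n

lemma extAsg_lt {M : Type} {v : ℕ → M} {m' k : ℕ} {ys : Fin k → M} {n : ℕ} (h : n < m') :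
    extAsg v m' k ys n = v n := by simp [extAsg, h]

lemma extAsg_ge {M : Type} {v : ℕ → M} {m' k : ℕ} {ys : Fin k → M} {n : ℕ}
    (h1 : m' ≤ n) (h2 : n - m' < k) : extAsg v m' k ys n = ys ⟨n - m', h2⟩ := by
  rw [extAsg, if_neg (not_lt.2 h1), dif_pos h2]

/-- Step handling an `∀∃`-axiom of `T` at a tuple of variables. -/
lemma step_T (C : Cond T P) (a b : ℕ) (ψ : L.BoundedFormula Empty (a + b)) (hψ : ψ.IsQF)
    (hσ : ((Paper.exsTo ψ).alls : L.Sentence) ∈ T) (abar : Fin a → ℕ) :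
    ∃ C', Extends C' C ∧ ∃ ebar : Fin (a + b) → ℕ,
      (∀ j : Fin a, ebar (Fin.castAdd b j) = abar j) ∧
      SemImp C' (Formula.relabel (Sum.elim Empty.elim ebar) ψ.toFormula) := by
  classical
  obtain ⟨M, hM, v, hv⟩ := C.sat
  set m' := max C.m ((Finset.univ.sup abar) + 1) with hm'
  have habar : ∀ j, abar j < m' := fun j =>
    lt_of_lt_of_le (Nat.lt_succ_of_le (Finset.le_sup (Finset.mem_univ j))) (le_max_right _ _)
  obtain ⟨ebar, hlt, hge, hecast⟩ : ∃ ebar : Fin (a + b) → ℕ,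
      (∀ (i : Fin (a + b)) (h : (i : ℕ) < a), ebar i = abar ⟨i, h⟩) ∧
      (∀ i : Fin (a + b), ¬ ((i : ℕ) < a) → ebar i = m' + ((i : ℕ) - a)) ∧
      (∀ j : Fin a, ebar (Fin.castAdd b j) = abar j) := by
    refine ⟨fun i => if h : (i : ℕ) < a then abar ⟨i, h⟩ else m' + ((i : ℕ) - a),
      fun i h => dif_pos h, fun i h => dif_neg h, fun j => dif_pos j.isLt⟩
  set δ : L.Formula ℕ := Formula.relabel (Sum.elim Empty.elim ebar) ψ.toFormula with hδdef
  have hqf : δ.IsQF := isQF_formulaRelabel (isQF_toFormula hψ) _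
  have hsupp : Supp (m' + b) δ := by
    refine Supp.relabel _ _ ?_
    rintro (e | i)
    · exact e.elim
    · simp only [Sum.elim_inr]
      by_cases h : (i : ℕ) < a
      · rw [hlt i h]
        exact lt_of_lt_of_le (habar _) (Nat.le_add_right _ _)
      · rw [hge i h]
        have := i.isLt
        omega
  -- satisfaction
  have hσr : M ⊨ (Paper.exsTo ψ).alls := T.realize_sentence_of_mem hσ
  have h2 : ∀ xs : Fin a → M, (Paper.exsTo ψ).Realize (default : Empty → M) xs :=
    BoundedFormula.realize_alls.1 hσr
  obtain ⟨zs, hz1, hz2⟩ := (realize_exsTo ψ default (fun j => v (abar j))).1 (h2 _)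
  set ys : Fin b → M := fun r => zs (Fin.natAdd a r) with hys
  set v' : ℕ → M := extAsg v m' b ys with hv'
  have hθ' : C.θ.Realize v' := by
    refine (C.supp M _ v v' ?_).1 hv
    intro i hi
    exact (extAsg_lt (lt_of_lt_of_le hi (le_max_left _ _))).symm
  have hδr : δ.Realize v' := by
    rw [hδdef, Formula.realize_relabel, BoundedFormula.realize_toFormula]
    have e2 : ((v' ∘ Sum.elim Empty.elim ebar) ∘ Sum.inr) = zs := by
      funext i
      simp only [Function.comp_apply, Sum.elim_inr]
      by_cases h : (i : ℕ) < a
      · rw [hlt i h, hv', extAsg_lt (habar _)]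
        have h3 := hz1 ⟨i, h⟩
        have hc : Fin.castAdd b (⟨i, h⟩ : Fin a) = i := by ext; rfl
        rw [hc] at h3
        exact h3.symm
      · rw [hge i h, hv', extAsg_ge (Nat.le_add_right _ _) (by have := i.isLt; omega)]
        rw [hys]
        simp only []
        congr 1
        ext
        simp only [Fin.coe_natAdd]
        have := i.isLt
        omega
    rw [e2, Subsingleton.elim ((v' ∘ Sum.elim Empty.elim ebar) ∘ Sum.inl) (default : Empty → M)]
    exact hz2
  obtain ⟨C', hC1, hC2⟩ := record_exists C δ (m' + b)
    (le_trans (le_max_left _ _) (Nat.le_add_right _ _)) hqf hsupp ⟨M, hM, v', hθ', hδr⟩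
  exact ⟨C', hC1, ebar, hecast, hC2⟩

/-- Step handling omission of a type `p ∈ P` at a tuple of variables. -/
lemma step_P (hPuniv : ∀ p ∈ P, Paper.IsUniversalMType L p) (C : Cond T P)
    (p : Paper.MType L) (hp : p ∈ P) (vbar : Fin p.1 → ℕ) :
    ∃ C', Extends C' C ∧ ∃ ψ ∈ p.2, ∃ (k : ℕ) (χ : L.BoundedFormula (Fin p.1) k),
      χ.IsQF ∧ ψ = χ.alls ∧ ∃ ybar : Fin k → ℕ,
      SemImp C' ((Formula.relabel (Sum.elim vbar ybar) χ.toFormula).not) := by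
  classical
  obtain ⟨M, hM, v, hv⟩ := C.sat
  set m' := max C.m ((Finset.univ.sup vbar) + 1) with hm'
  have hvbar : ∀ j, vbar j < m' := fun j =>
    lt_of_lt_of_le (Nat.lt_succ_of_le (Finset.le_sup (Finset.mem_univ j))) (le_max_right _ _)
  set u : Fin p.1 → M := fun j => v (vbar j) with hu
  have h1 : ¬ ∀ ψ ∈ p.2, ψ.Realize u := fun hcon => (hM p hp) ⟨u, hcon⟩
  obtain ⟨ψ, hmem, hnψ⟩ : ∃ ψ ∈ p.2, ¬ ψ.Realize u := by
    by_contra hcon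
    push_neg at hcon
    exact h1 hcon
  obtain ⟨k, χ, hχqf, rfl⟩ := hPuniv p hp ψ hmem
  rw [BoundedFormula.realize_alls] at hnψ
  push_neg at hnψ
  obtain ⟨ys, hys⟩ := hnψ
  set ybar : Fin k → ℕ := fun r => m' + r with hybar
  set δ : L.Formula ℕ := (Formula.relabel (Sum.elim vbar ybar) χ.toFormula).not with hδdef
  have hqf : δ.IsQF := (isQF_formulaRelabel (isQF_toFormula hχqf) _).not
  have hsupp : Supp (m' + k) δ := by
    refine Supp.not (Supp.relabel _ _ ?_)
    rintro (j | r)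
    · exact lt_of_lt_of_le (hvbar j) (Nat.le_add_right _ _)
    · simp only [Sum.elim_inr, hybar]
      have := r.isLt
      omega
  set v' : ℕ → M := extAsg v m' k ys with hv'
  have hθ' : C.θ.Realize v' := by
    refine (C.supp M _ v v' ?_).1 hv
    intro i hi
    exact (extAsg_lt (lt_of_lt_of_le hi (le_max_left _ _))).symm
  have hδr : δ.Realize v' := by
    rw [hδdef, Formula.realize_not, Formula.realize_relabel, BoundedFormula.realize_toFormula]
    have e1 : ((v' ∘ Sum.elim vbar ybar) ∘ Sum.inl) = u := by
      funext j
      simp only [Function.comp_apply, Sum.elim_inl, hu]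
      exact extAsg_lt (hvbar j)
    have e2 : ((v' ∘ Sum.elim vbar ybar) ∘ Sum.inr) = ys := by
      funext r
      simp only [Function.comp_apply, Sum.elim_inr, hybar]
      rw [hv', extAsg_ge (Nat.le_add_right _ _) (by have := r.isLt; omega)]
      congr 1
      ext
      simp only []
      have := r.isLt
      omega
    rw [e1, e2]
    exact hys
  obtain ⟨C', hC1, hC2⟩ := record_exists C δ (m' + k)
    (le_trans (le_max_left _ _) (Nat.le_add_right _ _)) hqf hsupp ⟨M, hM, v', hθ', hδr⟩
  exact ⟨C', hC1, χ.alls, hmem, k, χ, hχqf, rfl, ybar, hC2⟩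

end OT
namespace OT

variable {L : FirstOrder.Language.{0, 0}} {T : L.Theory} {P Q : Set (Paper.MType L)}

/-- Step handling omission of a type `q ∈ Q` at a tuple of variables, using that `q` is
existentially unsupported over `K(T|P)`. -/
lemma step_Q (hQuniv : ∀ q ∈ Q, Paper.IsUniversalMType L q)
    (hQun : ∀ q ∈ Q, ¬ Paper.MESupported (Paper.KTP T P) q)
    (C : Cond T P) (q : Paper.MType L) (hq : q ∈ Q) (vbar : Fin q.1 → ℕ) :
    ∃ C', Extends C' C ∧ ∃ ψ ∈ q.2, ∃ (k : ℕ) (χ : L.BoundedFormula (Fin q.1) k),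
      χ.IsQF ∧ ψ = χ.alls ∧ ∃ ybar : Fin k → ℕ,
      SemImp C' ((Formula.relabel (Sum.elim vbar ybar) χ.toFormula).not) := by
  classical
  set m' := max (C.m + 1) ((Finset.univ.sup vbar) + 1) with hm'
  have hm0 : 0 < m' := lt_of_lt_of_le (Nat.succ_pos C.m) (le_max_left _ _)
  have hCm : C.m < m' := lt_of_lt_of_le (Nat.lt_succ_self _) (le_max_left _ _)
  have hvbar : ∀ j, vbar j < m' := fun j =>
    lt_of_lt_of_le (Nat.lt_succ_of_le (Finset.le_sup (Finset.mem_univ j))) (le_max_right _ _)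
  set g : ℕ → Fin q.1 ⊕ Fin m' :=
    (fun i => Sum.inr (if h : i < m' then ⟨i, h⟩ else ⟨0, hm0⟩)) with hg
  set θb : L.BoundedFormula (Fin q.1) (m' + 0) := BoundedFormula.relabel g C.θ with hθb
  set eqf : Fin q.1 → L.BoundedFormula (Fin q.1) (m' + 0) := fun j =>
    Term.bdEqual (Term.var (Sum.inl j))
      (Term.var (Sum.inr (Fin.castAdd 0 ⟨vbar j, hvbar j⟩))) with heqf
  set φq : L.Formula (Fin q.1) := (θb ⊓ conjList (List.ofFn eqf)).exs with hφq
  have hqfin : (θb ⊓ conjList (List.ofFn eqf)).IsQF := by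
    refine (C.qf.relabel g).inf (isQF_conjList ?_)
    intro φ hφ
    rw [List.mem_ofFn] at hφ
    obtain ⟨j, rfl⟩ := hφ
    exact (BoundedFormula.IsAtomic.equal _ _).isQF
  have hex : Paper.IsExistentialFormula L φq := ⟨m' + 0, _, hqfin, rfl⟩
  -- unfolding the realization of `φq`
  have hreal : ∀ (M : Type) (S : L.Structure M) (u : Fin q.1 → M),
      φq.Realize u ↔ ∃ xs : Fin (m' + 0) → M,
        C.θ.Realize (fun i => xs (Fin.castAdd 0 (if h : i < m' then ⟨i, h⟩ else ⟨0, hm0⟩))) ∧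
        ∀ j, u j = xs (Fin.castAdd 0 ⟨vbar j, hvbar j⟩) := by
    intro M S u
    rw [hφq, BoundedFormula.realize_exs]
    apply exists_congr
    intro xs
    rw [BoundedFormula.realize_inf, hθb, BoundedFormula.realize_relabel, realize_bf0,
      realize_conjList]
    constructor
    · rintro ⟨h1, h2⟩
      refine ⟨h1, fun j => ?_⟩
      have := h2 (eqf j) (by rw [List.mem_ofFn]; exact ⟨j, rfl⟩)
      rw [heqf] at this
      simpa using this
    · rintro ⟨h1, h2⟩
      refine ⟨h1, fun φ hφ => ?_⟩
      rw [List.mem_ofFn] at hφ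
      obtain ⟨j, rfl⟩ := hφ
      rw [heqf]
      simpa using h2 j
  -- `φq` is satisfiable in `K(T|P)`
  have hsat : ∃ Mo ∈ Paper.KTP T P, ∃ u : Fin q.1 → Mo, φq.Realize u := by
    obtain ⟨M, hM, v, hv⟩ := C.sat
    refine ⟨M, hM, fun j => v (vbar j), (hreal _ _ _).2
      ⟨fun i => v ((i : ℕ)), ?_, fun j => rfl⟩⟩
    refine (C.supp _ _ v _ ?_).1 hv
    intro i hi
    have h1 : i < m' := lt_trans hi hCm
    rw [dif_pos h1]
    rfl
  -- apply unsupportedness of `q`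
  have hkey : ¬ ∀ Mo ∈ Paper.KTP T P, ∀ u : Fin q.1 → Mo, φq.Realize u →
      ∀ ψ ∈ q.2, ψ.Realize u := fun hcon => hQun q hq ⟨φq, hex, hsat, hcon⟩
  push_neg at hkey
  obtain ⟨M, hM, u, hφu, ψ, hψmem, hnψ⟩ := hkey
  obtain ⟨k, χ, hχqf, rfl⟩ := hQuniv q hq ψ hψmem
  rw [BoundedFormula.realize_alls] at hnψ
  push_neg at hnψ
  obtain ⟨ys, hys⟩ := hnψ
  obtain ⟨xs, hθx, hux⟩ := (hreal _ _ u).1 hφu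
  set v₀ : ℕ → M :=
    (fun i => xs (Fin.castAdd 0 (if h : i < m' then ⟨i, h⟩ else ⟨0, hm0⟩))) with hv₀
  set ybar : Fin k → ℕ := (fun r => m' + (r : ℕ)) with hybar
  set δ : L.Formula ℕ := (Formula.relabel (Sum.elim vbar ybar) χ.toFormula).not with hδdef
  have hqf : δ.IsQF := (isQF_formulaRelabel (isQF_toFormula hχqf) _).not
  have hsupp : Supp (m' + k) δ := by
    refine Supp.not (Supp.relabel _ _ ?_)
    rintro (j | r)
    · exact lt_of_lt_of_le (hvbar j) (Nat.le_add_right _ _)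
    · simp only [Sum.elim_inr, hybar]
      have := r.isLt
      omega
  set v' : ℕ → M := extAsg v₀ m' k ys with hv'
  have hθ' : C.θ.Realize v' := by
    refine (C.supp _ _ v₀ v' ?_).1 hθx
    intro i hi
    exact (extAsg_lt (lt_trans hi hCm)).symm
  have hδr : δ.Realize v' := by
    rw [hδdef, Formula.realize_not, Formula.realize_relabel, BoundedFormula.realize_toFormula]
    have e1 : ((v' ∘ Sum.elim vbar ybar) ∘ Sum.inl) = u := by
      funext j
      simp only [Function.comp_apply, Sum.elim_inl]
      rw [hv', extAsg_lt (hvbar j), hv₀]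
      simp only []
      rw [dif_pos (hvbar j)]
      exact (hux j).symm
    have e2 : ((v' ∘ Sum.elim vbar ybar) ∘ Sum.inr) = ys := by
      funext r
      simp only [Function.comp_apply, Sum.elim_inr, hybar]
      rw [hv', extAsg_ge (Nat.le_add_right _ _) (by have := r.isLt; omega)]
      congr 1
      ext
      simp only []
      have := r.isLt
      omega
    rw [e1, e2]
    exact hys
  obtain ⟨C', hC1, hC2⟩ := record_exists C δ (m' + k)
    (le_trans (le_of_lt hCm) (Nat.le_add_right _ _)) hqf hsupp ⟨M, hM, v', hθ', hδr⟩
  exact ⟨C', hC1, χ.alls, hψmem, k, χ, hχqf, rfl, ybar, hC2⟩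

end OT
namespace OT

variable {L : FirstOrder.Language.{0, 0}}

lemma countable_relations [Countable L.Symbols] : Countable (Σ l, L.Relations l) :=
  (Sum.inr_injective : Function.Injective (Sum.inr : (Σ l, L.Relations l) → L.Symbols)).countable

lemma countable_bf [Countable L.Symbols] {α : Type} [Countable α] (n : ℕ) :
    Countable (L.BoundedFormula α n) := by
  haveI := countable_relations (L := L)
  haveI : Countable (Σ n, L.BoundedFormula α n) :=
    BoundedFormula.listEncode_sigma_injective.countable
  exact Function.Injective.countable
    (f := fun φ => (⟨n, φ⟩ : Σ n, L.BoundedFormula α n)) fun φ ψ h => by simpa using h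

/-- Construction of the forcing chain: a "generic" predicate on quantifier-free formulas. -/
lemma exists_forcing [Countable L.Symbols] (T : L.Theory) (P Q : Set (Paper.MType L))
    (hP : P.Countable) (hQ : Q.Countable)
    (hPuniv : ∀ p ∈ P, Paper.IsUniversalMType L p)
    (hQuniv : ∀ q ∈ Q, Paper.IsUniversalMType L q)
    (hne : (Paper.KTP T P).Nonempty)
    (hQun : ∀ q ∈ Q, ¬ Paper.MESupported (Paper.KTP T P) q) :
    ∃ F : L.Formula ℕ → Prop,
      (∀ l : List (L.Formula ℕ), (∀ δ ∈ l, F δ) →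
        ∃ M : T.ModelType, M ∈ Paper.KTP T P ∧ ∃ v : ℕ → M, ∀ δ ∈ l, δ.Realize v) ∧
      (∀ φ : L.Formula ℕ, φ.IsQF → F φ ∨ F φ.not) ∧
      (∀ t : L.Term ℕ, ∃ ν : ℕ, F (Term.equal t (Term.var ν))) ∧
      (∀ (a b : ℕ) (ψ : L.BoundedFormula Empty (a + b)), ψ.IsQF →
        ((Paper.exsTo ψ).alls ∈ T) → ∀ abar : Fin a → ℕ,
        ∃ ebar : Fin (a + b) → ℕ, (∀ j, ebar (Fin.castAdd b j) = abar j) ∧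
          F (Formula.relabel (Sum.elim Empty.elim ebar) ψ.toFormula)) ∧
      (∀ p ∈ P, ∀ vbar : Fin p.1 → ℕ, ∃ ψ ∈ p.2,
        ∃ (k : ℕ) (χ : L.BoundedFormula (Fin p.1) k), χ.IsQF ∧ ψ = χ.alls ∧
        ∃ ybar : Fin k → ℕ, F ((Formula.relabel (Sum.elim vbar ybar) χ.toFormula).not)) ∧
      (∀ q ∈ Q, ∀ vbar : Fin q.1 → ℕ, ∃ ψ ∈ q.2,
        ∃ (k : ℕ) (χ : L.BoundedFormula (Fin q.1) k), χ.IsQF ∧ ψ = χ.alls ∧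
        ∃ ybar : Fin k → ℕ, F ((Formula.relabel (Sum.elim vbar ybar) χ.toFormula).not)) := by
  classical
  haveI := hP.to_subtype
  haveI := hQ.to_subtype
  haveI := countable_bf (L := L) (α := ℕ)
  -- the requirement type
  let R : Type :=
    ({φ : L.Formula ℕ // φ.IsQF} ⊕ L.Term ℕ) ⊕
    ((Σ d : ℕ × ℕ, {ψ : L.BoundedFormula Empty (d.1 + d.2) //
        ψ.IsQF ∧ (Paper.exsTo ψ).alls ∈ T} × (Fin d.1 → ℕ)) ⊕
      ((Σ p : P, (Fin (p : Paper.MType L).1 → ℕ)) ⊕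
       (Σ q : Q, (Fin (q : Paper.MType L).1 → ℕ))))
  haveI : Countable R := by
    haveI : ∀ d : ℕ × ℕ, Countable {ψ : L.BoundedFormula Empty (d.1 + d.2) //
        ψ.IsQF ∧ (Paper.exsTo ψ).alls ∈ T} := by
      intro d
      haveI := countable_bf (L := L) (α := Empty) (d.1 + d.2)
      infer_instance
    infer_instance
  haveI : Nonempty R := ⟨Sum.inl (Sum.inr (Term.var 0))⟩
  obtain ⟨e, he⟩ := exists_surjective_nat R
  -- the guarantee attached to each requirement
  let Guar : R → Cond T P → Prop := fun r C' =>
    match r with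
    | Sum.inl (Sum.inl φ) => SemImp C' φ.1 ∨ SemImp C' φ.1.not
    | Sum.inl (Sum.inr t) => ∃ ν : ℕ, SemImp C' (Term.equal t (Term.var ν))
    | Sum.inr (Sum.inl x) => ∃ ebar : Fin (x.1.1 + x.1.2) → ℕ,
        (∀ j : Fin x.1.1, ebar (Fin.castAdd x.1.2 j) = x.2.2 j) ∧
        SemImp C' (Formula.relabel (Sum.elim Empty.elim ebar)
          (x.2.1 : L.BoundedFormula Empty _).toFormula)
    | Sum.inr (Sum.inr (Sum.inl y)) => ∃ ψ ∈ (y.1 : Paper.MType L).2,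
        ∃ (k : ℕ) (χ : L.BoundedFormula (Fin (y.1 : Paper.MType L).1) k),
        χ.IsQF ∧ ψ = χ.alls ∧ ∃ ybar : Fin k → ℕ,
        SemImp C' ((Formula.relabel (Sum.elim y.2 ybar) χ.toFormula).not)
    | Sum.inr (Sum.inr (Sum.inr z)) => ∃ ψ ∈ (z.1 : Paper.MType L).2,
        ∃ (k : ℕ) (χ : L.BoundedFormula (Fin (z.1 : Paper.MType L).1) k),
        χ.IsQF ∧ ψ = χ.alls ∧ ∃ ybar : Fin k → ℕ,
        SemImp C' ((Formula.relabel (Sum.elim z.2 ybar) χ.toFormula).not)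
  have hstep : ∀ (C : Cond T P) (r : R), ∃ C' : Cond T P, Extends C' C ∧ Guar r C' := by
    intro C r
    rcases r with ((φ | t) | (x | (y | z)))
    · obtain ⟨C', h1, h2⟩ := step_dec C φ.1 φ.2
      exact ⟨C', h1, h2⟩
    · obtain ⟨C', h1, h2⟩ := step_term C t
      exact ⟨C', h1, h2⟩
    · obtain ⟨⟨a, b⟩, ⟨ψ, hψqf, hψT⟩, abar⟩ := x
      obtain ⟨C', h1, h2⟩ := step_T C a b ψ hψqf hψT abar
      exact ⟨C', h1, h2⟩
    · obtain ⟨⟨p, hp⟩, vbar⟩ := y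
      obtain ⟨C', h1, h2⟩ := step_P hPuniv C p hp vbar
      exact ⟨C', h1, h2⟩
    · obtain ⟨⟨q, hq⟩, vbar⟩ := z
      obtain ⟨C', h1, h2⟩ := step_Q hQuniv hQun C q hq vbar
      exact ⟨C', h1, h2⟩
  choose step hext hguar using hstep
  -- the base condition
  obtain ⟨M0, hM0⟩ := hne
  let C0 : Cond T P := ⟨0, ⊤, BoundedFormula.IsQF.top, fun M S v v' _ => by
      simp [Formula.realize_top], ⟨M0, hM0, fun _ => Classical.arbitrary M0,
      Formula.realize_top.2 trivial⟩⟩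
  -- the chain
  let c : ℕ → Cond T P := fun n => Nat.rec C0 (fun j Cj => step Cj (e j)) n
  have hchain : ∀ j, Extends (c (j + 1)) (c j) := fun j => hext (c j) (e j)
  have hmono : ∀ j j', j ≤ j' → Extends (c j') (c j) := by
    intro j j' h
    induction h with
    | refl => exact Extends.refl _
    | step h ih => exact (hchain _).trans ih
  refine ⟨fun δ => ∃ j, SemImp (c j) δ, ?_, ?_, ?_, ?_, ?_, ?_⟩
  · -- consistency
    intro l hl
    have : ∃ j, ∀ δ ∈ l, SemImp (c j) δ := by
      induction l with
      | nil => exact ⟨0, fun δ h => absurd h List.not_mem_nil⟩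
      | cons a t ih =>
        obtain ⟨ja, hja⟩ := hl a List.mem_cons_self
        obtain ⟨jt, hjt⟩ := ih fun δ hδ => hl δ (List.mem_cons_of_mem _ hδ)
        refine ⟨max ja jt, fun δ hδ => ?_⟩
        rcases List.mem_cons.1 hδ with rfl | hδ
        · exact hja.ofExtends (hmono _ _ (le_max_left _ _))
        · exact (hjt δ hδ).ofExtends (hmono _ _ (le_max_right _ _))
    obtain ⟨j, hj⟩ := this
    obtain ⟨M, hM, v, hv⟩ := (c j).sat
    exact ⟨M, hM, v, fun δ hδ => hj δ hδ M inferInstance v hv⟩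
  · -- decisions
    intro φ hφ
    obtain ⟨j, hj⟩ := he (Sum.inl (Sum.inl ⟨φ, hφ⟩))
    have this : Guar (e j) (c (j + 1)) := hguar (c j) (e j)
    rw [hj] at this
    rcases this with h | h
    · exact Or.inl ⟨j + 1, h⟩
    · exact Or.inr ⟨j + 1, h⟩
  · -- term witnesses
    intro t
    obtain ⟨j, hj⟩ := he (Sum.inl (Sum.inr t))
    have this : Guar (e j) (c (j + 1)) := hguar (c j) (e j)
    rw [hj] at this
    obtain ⟨ν, h⟩ := this
    exact ⟨ν, j + 1, h⟩
  · -- axioms of T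
    intro a b ψ hψqf hψT abar
    obtain ⟨j, hj⟩ := he (Sum.inr (Sum.inl ⟨(a, b), ⟨ψ, hψqf, hψT⟩, abar⟩))
    have this : Guar (e j) (c (j + 1)) := hguar (c j) (e j)
    rw [hj] at this
    obtain ⟨ebar, h1, h2⟩ := this
    exact ⟨ebar, h1, j + 1, h2⟩
  · -- types in P
    intro p hp vbar
    obtain ⟨j, hj⟩ := he (Sum.inr (Sum.inr (Sum.inl ⟨⟨p, hp⟩, vbar⟩)))
    have this : Guar (e j) (c (j + 1)) := hguar (c j) (e j)
    rw [hj] at this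
    obtain ⟨ψ, hψ, k, χ, h1, h2, ybar, h3⟩ := this
    exact ⟨ψ, hψ, k, χ, h1, h2, ybar, j + 1, h3⟩
  · -- types in Q
    intro q hq vbar
    obtain ⟨j, hj⟩ := he (Sum.inr (Sum.inr (Sum.inr ⟨⟨q, hq⟩, vbar⟩)))
    have this : Guar (e j) (c (j + 1)) := hguar (c j) (e j)
    rw [hj] at this
    obtain ⟨ψ, hψ, k, χ, h1, h2, ybar, h3⟩ := this
    exact ⟨ψ, hψ, k, χ, h1, h2, ybar, j + 1, h3⟩

end OT
namespace OT

variable {L : FirstOrder.Language.{0, 0}}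

/-- From a "generic" predicate `F`, build a countable term model whose quantifier-free
truth agrees with `F`. -/
lemma term_model (F : L.Formula ℕ → Prop)
    (hcons : ∀ l : List (L.Formula ℕ), (∀ δ ∈ l, F δ) →
      ∃ (M : Type) (S : L.Structure M) (v : ℕ → M), ∀ δ ∈ l, @Formula.Realize L M S ℕ δ v)
    (hdec : ∀ φ : L.Formula ℕ, φ.IsQF → F φ ∨ F φ.not)
    (hterm : ∀ t : L.Term ℕ, ∃ ν : ℕ, F (Term.equal t (Term.var ν))) :
    ∃ (M : Type) (S : L.Structure M) (e : ℕ → M), Countable M ∧ Function.Surjective e ∧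
      ∀ φ : L.Formula ℕ, φ.IsQF → (@Formula.Realize L M S ℕ φ e ↔ F φ) := by
  classical
  -- the forcing engine
  have key : ∀ (l : List (L.Formula ℕ)), (∀ δ ∈ l, F δ) → ∀ (φ : L.Formula ℕ), φ.IsQF →
      (∀ (M : Type) (S : L.Structure M) (v : ℕ → M),
        (∀ δ ∈ l, @Formula.Realize L M S ℕ δ v) → @Formula.Realize L M S ℕ φ v) → F φ := by
    intro l hl φ hφ h
    rcases hdec φ hφ with h1 | h1
    · exact h1
    · exfalso
      obtain ⟨M, S, v, hv⟩ := hcons (φ.not :: l) (by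
        intro δ hδ
        rcases List.mem_cons.1 hδ with rfl | hδ
        · exact h1
        · exact hl _ hδ)
      letI := S
      have h2 := hv φ.not List.mem_cons_self
      rw [Formula.realize_not] at h2
      exact h2 (h M S v fun δ hδ => hv δ (List.mem_cons_of_mem _ hδ))
  have hnotboth : ∀ φ : L.Formula ℕ, F φ → F φ.not → False := by
    intro φ h1 h2
    obtain ⟨M, S, v, hv⟩ := hcons [φ, φ.not] (by
      intro δ hδ
      rcases List.mem_cons.1 hδ with rfl | hδ
      · exact h1
      · simp only [List.mem_singleton] at hδ
        exact hδ ▸ h2)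
    letI := S
    exact (Formula.realize_not.1 (hv φ.not (by simp))) (hv φ (by simp))
  -- the setoid of variables
  let r : ℕ → ℕ → Prop := fun i j => F (Term.equal (Term.var i) (Term.var j))
  have hrefl : ∀ i, r i i := by
    intro i
    refine key [] (by simp) _ (isQF_equal _ _) ?_
    intro M S v _
    letI := S
    rw [Formula.realize_equal]
  have hsymm : ∀ {i j}, r i j → r j i := by
    intro i j h
    refine key [Term.equal (Term.var i) (Term.var j)] (by simpa using h) _
      (isQF_equal _ _) ?_
    intro M S v hv
    letI := S
    have h2 := hv _ (List.mem_singleton_self _)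
    rw [Formula.realize_equal] at h2 ⊢
    exact h2.symm
  have htrans : ∀ {i j k}, r i j → r j k → r i k := by
    intro i j k h1 h2
    refine key [Term.equal (Term.var i) (Term.var j), Term.equal (Term.var j) (Term.var k)]
      ?_ _ (isQF_equal _ _) ?_
    · intro δ hδ
      rcases List.mem_cons.1 hδ with rfl | hδ
      · exact h1
      · simp only [List.mem_singleton] at hδ
        exact hδ ▸ h2
    · intro M S v hv
      letI := S
      have e1 := hv _ List.mem_cons_self
      have e2 := hv _ (List.mem_cons_of_mem _ (List.mem_singleton_self _))
      rw [Formula.realize_equal] at e1 e2 ⊢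
      exact e1.trans e2
  let s : Setoid ℕ := ⟨r, ⟨fun i => hrefl i, fun h => hsymm h, fun h1 h2 => htrans h1 h2⟩⟩
  let Mq : Type := Quotient s
  have hqe : ∀ i j : ℕ, (Quotient.mk s i = Quotient.mk s j) ↔ r i j :=
    fun i j => ⟨fun h => Quotient.exact h, fun h => @Quotient.sound ℕ s i j h⟩
  -- the structure on the quotient
  letI S : L.Structure Mq :=
    { funMap := fun {n} f u =>
        Quotient.mk s (hterm (Term.func f (fun i => Term.var (Quotient.out (u i))))).choose
      RelMap := fun {n} R u =>
        F (Relations.formula R (fun i => Term.var (Quotient.out (u i)))) }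
  let e : ℕ → Mq := fun i => Quotient.mk s i
  have hout : ∀ (x : Mq), e (Quotient.out x) = x := fun x => Quotient.out_eq x
  -- term lemma
  have tuniq : ∀ (t : L.Term ℕ) (ν ν' : ℕ), F (Term.equal t (Term.var ν)) →
      F (Term.equal t (Term.var ν')) → r ν ν' := by
    intro t ν ν' h1 h2
    refine key [Term.equal t (Term.var ν), Term.equal t (Term.var ν')] ?_ _
      (isQF_equal _ _) ?_
    · intro δ hδ
      rcases List.mem_cons.1 hδ with rfl | hδ
      · exact h1
      · simp only [List.mem_singleton] at hδ
        exact hδ ▸ h2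
    · intro M S v hv
      letI := S
      have e1 := hv _ List.mem_cons_self
      have e2 := hv _ (List.mem_cons_of_mem _ (List.mem_singleton_self _))
      rw [Formula.realize_equal] at e1 e2 ⊢
      rw [← e1, ← e2]
  have tlem : ∀ t : L.Term ℕ, ∃ ν : ℕ, F (Term.equal t (Term.var ν)) ∧
      Term.realize e t = Quotient.mk s ν := by
    intro t
    induction t with
    | var i => exact ⟨i, hrefl i, rfl⟩
    | @func n f ts ih =>
      choose ν hν1 hν2 using ih
      set u : Fin n → Mq := fun i => Quotient.mk s (ν i) with hu
      set t0 : L.Term ℕ := Term.func f (fun i => Term.var (Quotient.out (u i))) with ht0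
      set μ : ℕ := (hterm t0).choose with hμdef
      have hμ : F (Term.equal t0 (Term.var μ)) := (hterm t0).choose_spec
      have houtν : ∀ i, r (Quotient.out (u i)) (ν i) := by
        intro i
        exact (hqe _ _).1 (Quotient.out_eq _)
      refine ⟨μ, ?_, ?_⟩
      · -- F (equal (func f ts) (var μ))
        refine key ((List.ofFn fun i => Term.equal (ts i) (Term.var (ν i))) ++
          (List.ofFn fun i => Term.equal (Term.var (Quotient.out (u i))) (Term.var (ν i))) ++
          [Term.equal t0 (Term.var μ)]) ?_ _ (isQF_equal _ _) ?_
        · intro δ hδ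
          simp only [List.mem_append, List.mem_ofFn, List.mem_cons, List.not_mem_nil, or_false] at hδ
          rcases hδ with (⟨i, rfl⟩ | ⟨i, rfl⟩) | rfl
          · exact hν1 i
          · exact houtν i
          · exact hμ
        · intro M S v hv
          letI := S
          have h1 : ∀ i, Term.realize v (ts i) = v (ν i) := by
            intro i
            have := hv (Term.equal (ts i) (Term.var (ν i))) (by
              simp only [List.mem_append, List.mem_ofFn]
              exact Or.inl (Or.inl ⟨i, rfl⟩))
            rw [Formula.realize_equal] at this
            simpa using this
          have h2 : ∀ i, v (Quotient.out (u i)) = v (ν i) := by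
            intro i
            have := hv (Term.equal (Term.var (Quotient.out (u i))) (Term.var (ν i))) (by
              simp only [List.mem_append, List.mem_ofFn]
              exact Or.inl (Or.inr ⟨i, rfl⟩))
            rw [Formula.realize_equal] at this
            simpa using this
          have h3 : Term.realize v t0 = v μ := by
            have := hv (Term.equal t0 (Term.var μ)) (by simp)
            rw [Formula.realize_equal] at this
            simpa using this
          rw [Formula.realize_equal]
          simp only [Term.realize_var]
          rw [← h3, ht0]
          simp only [Term.realize_func]
          congr 1
          funext i
          simp only [Term.realize_var]
          rw [h1 i, h2 i]
      · -- realization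
        have hstep : Term.realize e (Term.func f ts) =
            Structure.funMap (M := Mq) f (fun i => Term.realize e (ts i)) := by
          simp [Term.realize_func]
        rw [hstep]
        have harg : (fun i => Term.realize e (ts i)) = u := funext fun i => hν2 i
        rw [harg]
        rfl
  -- quantifier-free truth lemma
  have TL : ∀ (φ : L.Formula ℕ), φ.IsQF → (@Formula.Realize L Mq S ℕ φ e ↔ F φ) := by
    intro φ hφ
    induction hφ with
    | falsum =>
      refine iff_of_false (fun h => h) (fun h => ?_)
      obtain ⟨M, S', v, hv⟩ := hcons [BoundedFormula.falsum] (by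
        intro δ hδ
        simp only [List.mem_singleton] at hδ
        exact hδ ▸ h)
      exact hv _ (List.mem_singleton_self _)
    | @of_isAtomic φ' h =>
      cases h with
      | equal t₁ t₂ =>
        -- translate the two terms to terms over ℕ
        have hconv : ∀ (M : Type) (S' : L.Structure M) (v : ℕ → M) (xs : Fin 0 → M)
            (t : L.Term (ℕ ⊕ Fin 0)), Term.realize (Sum.elim v xs) t =
            Term.realize v (t.relabel (Sum.elim id Fin.elim0)) := by
          intro M S' v xs t
          rw [Term.realize_relabel]
          congr 1
          funext x
          rcases x with i | x
          · rfl
          · exact x.elim0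
        obtain ⟨ν₁, hν₁, hr₁⟩ := tlem (t₁.relabel (Sum.elim id Fin.elim0))
        obtain ⟨ν₂, hν₂, hr₂⟩ := tlem (t₂.relabel (Sum.elim id Fin.elim0))
        have hrealize : @Formula.Realize L Mq S ℕ (t₁.bdEqual t₂) e ↔ r ν₁ ν₂ := by
          rw [Formula.Realize, BoundedFormula.realize_bdEqual, hconv Mq S e _ t₁,
            hconv Mq S e _ t₂, hr₁, hr₂]
          exact hqe ν₁ ν₂
        rw [hrealize]
        constructor
        · intro h
          refine key [Term.equal (t₁.relabel (Sum.elim id Fin.elim0)) (Term.var ν₁),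
            Term.equal (t₂.relabel (Sum.elim id Fin.elim0)) (Term.var ν₂),
            Term.equal (Term.var ν₁) (Term.var ν₂)] ?_ _
            ((BoundedFormula.IsAtomic.equal t₁ t₂).isQF) ?_
          · intro δ hδ
            simp only [List.mem_cons, List.not_mem_nil, or_false] at hδ
            rcases hδ with rfl | rfl | rfl
            · exact hν₁
            · exact hν₂
            · exact h
          · intro M S' v hv
            letI := S'
            have e1 := hv _ List.mem_cons_self
            have e2 := hv _ (List.mem_cons_of_mem _ List.mem_cons_self)
            have e3 := hv _ (List.mem_cons_of_mem _ (List.mem_cons_of_mem _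
              (List.mem_singleton_self _)))
            rw [Formula.realize_equal] at e1 e2 e3
            rw [Formula.Realize, BoundedFormula.realize_bdEqual, hconv M S' v _ t₁,
              hconv M S' v _ t₂, e1, e2]
            simpa using e3
        · intro h
          refine key [t₁.bdEqual t₂,
            Term.equal (t₁.relabel (Sum.elim id Fin.elim0)) (Term.var ν₁),
            Term.equal (t₂.relabel (Sum.elim id Fin.elim0)) (Term.var ν₂)] ?_ _
            (isQF_equal _ _) ?_
          · intro δ hδ
            simp only [List.mem_cons, List.not_mem_nil, or_false] at hδ
            rcases hδ with rfl | rfl | rfl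
            · exact h
            · exact hν₁
            · exact hν₂
          · intro M S' v hv
            letI := S'
            have e0 := hv _ List.mem_cons_self
            have e1 := hv _ (List.mem_cons_of_mem _ List.mem_cons_self)
            have e2 := hv _ (List.mem_cons_of_mem _ (List.mem_cons_of_mem _
              (List.mem_singleton_self _)))
            rw [Formula.Realize, BoundedFormula.realize_bdEqual, hconv M S' v _ t₁,
              hconv M S' v _ t₂] at e0
            rw [Formula.realize_equal] at e1 e2 ⊢
            simp only [Term.realize_var] at e1 e2 ⊢
            rw [← e1, ← e2]
            exact e0
      | @rel l' R ts =>
        have hconv : ∀ (M : Type) (S' : L.Structure M) (v : ℕ → M) (xs : Fin 0 → M)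
            (t : L.Term (ℕ ⊕ Fin 0)), Term.realize (Sum.elim v xs) t =
            Term.realize v (t.relabel (Sum.elim id Fin.elim0)) := by
          intro M S' v xs t
          rw [Term.realize_relabel]
          congr 1
          funext x
          rcases x with i | x
          · rfl
          · exact x.elim0
        choose ν hν1 hν2 using fun i => tlem ((ts i).relabel (Sum.elim id Fin.elim0))
        have houtν : ∀ i, r (Quotient.out (Quotient.mk s (ν i))) (ν i) := by
          intro i
          exact (hqe _ _).1 (Quotient.out_eq _)
        have hrealize : @Formula.Realize L Mq S ℕ (R.boundedFormula ts) e ↔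
            F (Relations.formula R
              (fun i => Term.var (Quotient.out (Quotient.mk s (ν i))))) := by
          have h0 : @Formula.Realize L Mq S ℕ (R.boundedFormula ts) e ↔
              Structure.RelMap (M := Mq) R
                (fun i => Term.realize (Sum.elim e (default : Fin 0 → Mq)) (ts i)) :=
            (realize_bf0 _).symm.trans BoundedFormula.realize_rel
          rw [h0]
          have harg : (fun i => Term.realize (Sum.elim e (default : Fin 0 → Mq)) (ts i)) =
              (fun i => Quotient.mk s (ν i)) := by
            funext i
            exact (hconv Mq S e _ (ts i)).trans (hν2 i)
          rw [harg]
          exact Iff.rfl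
        rw [hrealize]
        constructor
        · intro h
          refine key ((List.ofFn fun i =>
              Term.equal ((ts i).relabel (Sum.elim id Fin.elim0)) (Term.var (ν i))) ++
            (List.ofFn fun i => Term.equal
              (Term.var (Quotient.out (Quotient.mk s (ν i)))) (Term.var (ν i))) ++
            [Relations.formula R
              (fun i => Term.var (Quotient.out (Quotient.mk s (ν i))))]) ?_ _
            ((BoundedFormula.IsAtomic.rel R ts).isQF) ?_
          · intro δ hδ
            simp only [List.mem_append, List.mem_ofFn, List.mem_cons, List.not_mem_nil, or_false] at hδ
            rcases hδ with (⟨i, rfl⟩ | ⟨i, rfl⟩) | rfl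
            · exact hν1 i
            · exact houtν i
            · exact h
          · intro M S' v hv
            letI := S'
            have e3 := hv _ (by simp : Relations.formula R
              (fun i => Term.var (Quotient.out (Quotient.mk s (ν i)))) ∈ _)
            rw [Formula.realize_rel] at e3
            refine ((realize_bf0 (R.boundedFormula ts) (v := v)
              (xs := fun x => x.elim0)).symm.trans BoundedFormula.realize_rel).mpr ?_
            show Structure.RelMap R
              (fun i => (ts i).realize (Sum.elim v (fun x => x.elim0 : Fin 0 → M)))
            have harg : (fun i => (ts i).realize
                (Sum.elim v (fun x => x.elim0 : Fin 0 → M))) =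
                (fun i => v (Quotient.out (Quotient.mk s (ν i)))) := by
              funext i
              rw [hconv M S' v _ (ts i)]
              have e1 := hv (Term.equal ((ts i).relabel (Sum.elim id Fin.elim0))
                (Term.var (ν i))) (by
                  simp only [List.mem_append, List.mem_ofFn]
                  exact Or.inl (Or.inl ⟨i, rfl⟩))
              have e2 := hv (Term.equal (Term.var (Quotient.out (Quotient.mk s (ν i))))
                (Term.var (ν i))) (by
                  simp only [List.mem_append, List.mem_ofFn]
                  exact Or.inl (Or.inr ⟨i, rfl⟩))
              rw [Formula.realize_equal] at e1 e2
              simp only [Term.realize_var] at e1 e2 ⊢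
              rw [e1, e2]
            rw [harg]
            simpa using e3
        · intro h
          refine key ((List.ofFn fun i =>
              Term.equal ((ts i).relabel (Sum.elim id Fin.elim0)) (Term.var (ν i))) ++
            (List.ofFn fun i => Term.equal
              (Term.var (Quotient.out (Quotient.mk s (ν i)))) (Term.var (ν i))) ++
            [R.boundedFormula ts]) ?_ _ (isQF_relFormula _ _) ?_
          · intro δ hδ
            simp only [List.mem_append, List.mem_ofFn, List.mem_cons, List.not_mem_nil, or_false] at hδ
            rcases hδ with (⟨i, rfl⟩ | ⟨i, rfl⟩) | rfl
            · exact hν1 i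
            · exact houtν i
            · exact h
          · intro M S' v hv
            letI := S'
            have e3 := hv (R.boundedFormula ts) (by simp)
            have e3' : Structure.RelMap R
                (fun i => (ts i).realize (Sum.elim v (fun x => x.elim0 : Fin 0 → M))) :=
              ((realize_bf0 (R.boundedFormula ts) (v := v)
                (xs := fun x => x.elim0)).symm.trans BoundedFormula.realize_rel).mp e3
            rw [Formula.realize_rel]
            have harg : (fun i => (Term.var
                (Quotient.out (Quotient.mk s (ν i))) : L.Term ℕ).realize v) =
                (fun i => (ts i).realize
                  (Sum.elim v (fun x => x.elim0 : Fin 0 → M))) := by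
              funext i
              rw [hconv M S' v _ (ts i)]
              have e1 := hv (Term.equal ((ts i).relabel (Sum.elim id Fin.elim0))
                (Term.var (ν i))) (by
                  simp only [List.mem_append, List.mem_ofFn]
                  exact Or.inl (Or.inl ⟨i, rfl⟩))
              have e2 := hv (Term.equal (Term.var (Quotient.out (Quotient.mk s (ν i))))
                (Term.var (ν i))) (by
                  simp only [List.mem_append, List.mem_ofFn]
                  exact Or.inl (Or.inr ⟨i, rfl⟩))
              rw [Formula.realize_equal] at e1 e2
              simp only [Term.realize_var] at e1 e2 ⊢
              rw [e1, e2]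
            rw [harg]
            exact e3'
    | @imp φ₁ φ₂ h₁ h₂ ih₁ ih₂ =>
      rw [Formula.realize_imp, ih₁, ih₂]
      constructor
      · intro h
        rcases hdec (φ₁.imp φ₂) (h₁.imp h₂) with hF | hF
        · exact hF
        · exfalso
          have hφ1 : F φ₁ := by
            refine key [(φ₁.imp φ₂).not] (by
              intro δ hδ
              simp only [List.mem_singleton] at hδ
              exact hδ ▸ hF) _ h₁ ?_
            intro M S' v hv
            letI := S'
            have h3 := hv _ (List.mem_singleton_self _)
            rw [Formula.realize_not, Formula.realize_imp] at h3
            by_contra hc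
            exact h3 fun h4 => absurd h4 hc
          have hφ2 : F φ₂ := h hφ1
          refine hnotboth (φ₁.imp φ₂) ?_ hF
          refine key [φ₂] (by
            intro δ hδ
            simp only [List.mem_singleton] at hδ
            exact hδ ▸ hφ2) _ (h₁.imp h₂) ?_
          intro M S' v hv
          letI := S'
          rw [Formula.realize_imp]
          exact fun _ => hv _ (List.mem_singleton_self _)
      · intro hF hφ1
        refine key [φ₁.imp φ₂, φ₁] ?_ _ h₂ ?_
        · intro δ hδ
          rcases List.mem_cons.1 hδ with rfl | hδ
          · exact hF
          · simp only [List.mem_singleton] at hδ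
            exact hδ ▸ hφ1
        · intro M S' v hv
          letI := S'
          have e1 := hv _ List.mem_cons_self
          have e2 := hv _ (List.mem_cons_of_mem _ (List.mem_singleton_self _))
          rw [Formula.realize_imp] at e1
          exact e1 e2
  refine ⟨Mq, S, e, ?_, ?_, TL⟩
  · exact Function.Surjective.countable (f := e) fun x => ⟨Quotient.out x, Quotient.out_eq x⟩
  · exact fun x => ⟨Quotient.out x, Quotient.out_eq x⟩

end OT

/-- Omitting types for `∀∃`-theories: if `K(T|P)` is nonempty and every
universal type in the countable set `Q` is existentially unsupported over `K(T|P)`, then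
some countable model in `K(T|P)` omits every type in `Q`. -/
theorem stmt_13 (L : FirstOrder.Language.{0, 0}) [Countable L.Symbols] (T : L.Theory)
    (hAE : Paper.IsAETheory L T)
    (P Q : Set (Paper.MType L)) (hP : P.Countable) (hQ : Q.Countable)
    (hPuniv : ∀ p ∈ P, Paper.IsUniversalMType L p)
    (hQuniv : ∀ q ∈ Q, Paper.IsUniversalMType L q)
    (hne : (Paper.KTP T P).Nonempty)
    (hQun : ∀ q ∈ Q, ¬ Paper.MESupported (Paper.KTP T P) q) :
    ∃ M ∈ Paper.KTP T P, Countable (M : Type) ∧ ∀ q ∈ Q, ¬ Paper.MRealizes M q := by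
  classical
  obtain ⟨F, hcons, hdec, hterm, hT, hPom, hQom⟩ :=
    OT.exists_forcing T P Q hP hQ hPuniv hQuniv hne hQun
  have hcons' : ∀ l : List (L.Formula ℕ), (∀ δ ∈ l, F δ) →
      ∃ (M : Type) (S : L.Structure M) (v : ℕ → M), ∀ δ ∈ l, @Formula.Realize L M S ℕ δ v := by
    intro l hl
    obtain ⟨M, _, v, hv⟩ := hcons l hl
    exact ⟨M, inferInstance, v, hv⟩
  obtain ⟨M0, S0, e, hcnt, hsurj, TL⟩ := OT.term_model F hcons' hdec hterm
  letI := S0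
  haveI : Nonempty M0 := ⟨e 0⟩
  haveI hmodel : M0 ⊨ T := by
    refine (Theory.model_iff T).2 ?_
    intro σ hσ
    obtain ⟨a, b, ψ, hψqf, rfl⟩ := hAE σ hσ
    have hall : ∀ (w : Empty → M0) (xs : Fin a → M0), (Paper.exsTo ψ).Realize w xs := by
      intro w xs
      have habar : ∀ j, e (Classical.choose (hsurj (xs j))) = xs j :=
        fun j => Classical.choose_spec (hsurj (xs j))
      obtain ⟨ebar, hcast, hF⟩ := hT a b ψ hψqf hσ fun j => Classical.choose (hsurj (xs j))
      have hδqf : (Formula.relabel (Sum.elim Empty.elim ebar) ψ.toFormula).IsQF :=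
        OT.isQF_formulaRelabel (OT.isQF_toFormula hψqf) _
      have hreal := (TL _ hδqf).2 hF
      rw [Formula.realize_relabel, BoundedFormula.realize_toFormula] at hreal
      rw [OT.realize_exsTo]
      refine ⟨fun i => e (ebar i), fun j => ?_, ?_⟩
      · show e (ebar (Fin.castAdd b j)) = xs j
        rw [hcast j]
        exact habar j
      · have h1 : ((e ∘ Sum.elim Empty.elim ebar) ∘ Sum.inl) = w := Subsingleton.elim _ _
        have h2 : ((e ∘ Sum.elim Empty.elim ebar) ∘ Sum.inr) = fun i => e (ebar i) := rfl
        rw [h1, h2] at hreal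
        exact hreal
    exact BoundedFormula.realize_alls.2 (hall _)
  refine ⟨Theory.ModelType.of T M0, ?_, hcnt, ?_⟩
  · intro p hp
    rintro ⟨u, hu⟩
    have hvb : ∀ j, e (Classical.choose (hsurj (u j))) = u j :=
      fun j => Classical.choose_spec (hsurj (u j))
    obtain ⟨ψ, hmem, k, χ, hχqf, rfl, ybar, hF⟩ :=
      hPom p hp fun j => Classical.choose (hsurj (u j))
    have hδqf : ((Formula.relabel (Sum.elim (fun j => Classical.choose (hsurj (u j))) ybar)
        χ.toFormula).not).IsQF :=
      (OT.isQF_formulaRelabel (OT.isQF_toFormula hχqf) _).not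
    have hreal := (TL _ hδqf).2 hF
    rw [Formula.realize_not, Formula.realize_relabel,
      BoundedFormula.realize_toFormula] at hreal
    apply hreal
    have h1 : ((e ∘ Sum.elim (fun j => Classical.choose (hsurj (u j))) ybar) ∘ Sum.inl) = u :=
      funext fun j => hvb j
    have h2 := BoundedFormula.realize_alls.1 (hu (χ.alls) hmem)
      ((e ∘ Sum.elim (fun j => Classical.choose (hsurj (u j))) ybar) ∘ Sum.inr)
    rw [h1]
    exact h2
  · intro q hq
    rintro ⟨u, hu⟩
    have hvb : ∀ j, e (Classical.choose (hsurj (u j))) = u j :=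
      fun j => Classical.choose_spec (hsurj (u j))
    obtain ⟨ψ, hmem, k, χ, hχqf, rfl, ybar, hF⟩ :=
      hQom q hq fun j => Classical.choose (hsurj (u j))
    have hδqf : ((Formula.relabel (Sum.elim (fun j => Classical.choose (hsurj (u j))) ybar)
        χ.toFormula).not).IsQF :=
      (OT.isQF_formulaRelabel (OT.isQF_toFormula hχqf) _).not
    have hreal := (TL _ hδqf).2 hF
    rw [Formula.realize_not, Formula.realize_relabel,
      BoundedFormula.realize_toFormula] at hreal
    apply hreal
    have h1 : ((e ∘ Sum.elim (fun j => Classical.choose (hsurj (u j))) ybar) ∘ Sum.inl) = u :=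
      funext fun j => hvb j
    have h2 := BoundedFormula.realize_alls.1 (hu (χ.alls) hmem)
      ((e ∘ Sum.elim (fun j => Classical.choose (hsurj (u j))) ybar) ∘ Sum.inr)
    rw [h1]
    exact h2
end
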